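/- arXiv:2503.01110 — 12 statements merged into one kernel-verified Lean document; each statement's English description precedes it below -/
import Mathlib

section
/- Let f : ℤ^n → ℝ ∪ {+∞} be an M-convex function. A vector x* ∈ dom f is a minimizer of f (i.e., f(x*) ≤ f(y) for all y ∈ ℤ^n) if and only if f(x* + χ_i − χ_j) ≥ f(x*) for all i, j ∈ N. -/
noncomputable section

open scoped BigOperators

/-- The `i`-th unit vector in `ℤ^n`. -/
def chi {n : ℕ} (i : Fin n) : Fin n → ℤ := fun k => if k = i then 1 else 0

/-- The function never takes the value `-∞`, i.e. its codomain is `ℝ ∪ {+∞}`. -/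
def NoBot {n : ℕ} (f : (Fin n → ℤ) → EReal) : Prop := ∀ x, f x ≠ ⊥

/-- M-convexity: nonempty effective domain together with the exchange axiom (M-EXC). -/
def MConvexFn {n : ℕ} (f : (Fin n → ℤ) → EReal) : Prop :=
  (∃ x, f x ≠ ⊤) ∧
  ∀ x y : Fin n → ℤ, f x ≠ ⊤ → f y ≠ ⊤ →
    ∀ i : Fin n, y i < x i →
      ∃ j : Fin n, x j < y j ∧
        f (x - chi i + chi j) + f (y + chi i - chi j) ≤ f x + f y

/-- The slopeZ `f'(x; i, j) = f(x + χ_i - χ_j) - f(x)`. -/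
def slopeZ {n : ℕ} (f : (Fin n → ℤ) → EReal) (x : Fin n → ℤ) (i j : Fin n) : EReal :=
  f (x + chi i - chi j) - f x

/-- `φ(x) = min_{i, j ∈ N} f'(x; i, j)`. -/
def phi {n : ℕ} (f : (Fin n → ℤ) → EReal) (x : Fin n → ℤ) : EReal :=
  ⨅ i : Fin n, ⨅ j : Fin n, slopeZ f x i j

lemma ereal_exists_real {a : EReal} (hb : a ≠ ⊥) (ht : a ≠ ⊤) : ∃ r : ℝ, a = (r : EReal) := by
  induction a using EReal.rec with
  | bot => exact absurd rfl hb
  | coe r => exact ⟨r, rfl⟩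
  | top => exact absurd rfl ht

/-- A point `x* ∈ dom f` of an M-convex function `f` is a global minimizer of `f`
iff `f(x* + χ_i - χ_j) ≥ f(x*)` for all `i, j ∈ N`. -/
theorem statement0 {n : ℕ} (hn : 1 ≤ n) (f : (Fin n → ℤ) → EReal)
    (hbot : NoBot f) (hM : MConvexFn f)
    (x : Fin n → ℤ) (hx : f x ≠ ⊤) :
    (∀ y : Fin n → ℤ, f x ≤ f y) ↔
      (∀ i j : Fin n, f x ≤ f (x + chi i - chi j)) := by
  constructor
  · intro h i j; exact h _
  · intro hloc
    obtain ⟨a, ha⟩ := ereal_exists_real (hbot x) hx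
    have key : ∀ m : ℕ, ∀ y : Fin n → ℤ, (∑ k, (x k - y k).natAbs) ≤ m → f x ≤ f y := by
      intro m
      induction m with
      | zero =>
        intro y hy
        have : x = y := by
          funext k
          have := Finset.sum_eq_zero_iff.mp (Nat.le_zero.mp hy) k (Finset.mem_univ k)
          omega
        rw [this]
      | succ m ih =>
        intro y hy
        by_cases hyt : f y = ⊤
        · rw [hyt]; exact le_top
        by_cases hxy : x = y
        · rw [hxy]
        -- there exists i with y i < x i
        have hex : ∃ i, y i < x i := by
          by_contra hno
          push_neg at hno
          have hlt : ∃ i, x i < y i := by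
            by_contra hno2
            push_neg at hno2
            exact hxy (funext fun k => le_antisymm (hno k) (hno2 k))
          obtain ⟨i, hi⟩ := hlt
          obtain ⟨j, hj, _⟩ := hM.2 y x hyt hx i hi
          exact absurd hj (not_lt.mpr (hno j))
        obtain ⟨i, hi⟩ := hex
        obtain ⟨j, hj, hineq⟩ := hM.2 x y hx hyt i hi
        have hij : i ≠ j := fun h => by rw [h] at hi; omega
        have hloc' : f x ≤ f (x - chi i + chi j) := by
          have : x - chi i + chi j = x + chi j - chi i := by abel
          rw [this]; exact hloc j i
        set y' := y + chi i - chi j with hy'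
        -- f x + f y' ≤ f x + f y
        have h1 : f x + f y' ≤ f x + f y :=
          le_trans (add_le_add_left hloc' (f y')) hineq
        -- cancel
        have h2 : f y' ≤ f y := by
          rw [ha] at h1
          exact (EReal.addLECancellable_coe a).add_le_add_iff_left.mp h1
        -- measure decreases
        have hsum : (∑ k, (x k - y' k).natAbs) ≤ m := by
          have hlt2 : (∑ k, (x k - y' k).natAbs) < ∑ k, (x k - y k).natAbs := by
            apply Finset.sum_lt_sum
            · intro k _
              simp only [hy', chi, Pi.add_apply, Pi.sub_apply]
              split_ifs <;> subst_vars <;> omega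
            · refine ⟨i, Finset.mem_univ i, ?_⟩
              simp only [hy', chi, Pi.add_apply, Pi.sub_apply]
              split_ifs <;> subst_vars <;> omega
          omega
        exact le_trans (ih y' hsum) h2
    intro y
    exact key (∑ k, (x k - y k).natAbs) y le_rfl
end
end

section
/- Let f : ℤ^n → ℝ ∪ {+∞} be an M-convex function, y ∈ dom f with φ(y) < 0, and let i, j ∈ N be distinct with f'(y; i, j) = φ(y). Then φ(y + χ_i − χ_j) ≥ φ(y); moreover, for every pair of distinct h, k ∈ N it holds that f'(y + χ_i − χ_j; h, k) ≥ φ(y), and if this inequality holds with equality then f'(y + χ_i − χ_j; h, k) = φ(y + χ_i − χ_j), i.e., +χ_h − χ_k is a steepest descent direction at y + χ_i − χ_j. -/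
noncomputable section

open scoped BigOperators

lemma exists_real {a : EReal} (hb : a ≠ ⊥) (ht : a ≠ ⊤) : ∃ r : ℝ, a = r := by
  induction a using EReal.rec with
  | bot => simp at hb
  | coe r => exact ⟨r, rfl⟩
  | top => simp at ht

lemma phi_le {n : ℕ} (f : (Fin n → ℤ) → EReal) (x : Fin n → ℤ) (a b : Fin n) :
    phi f x ≤ slopeZ f x a b := by
  unfold phi; exact iInf_le_of_le a (iInf_le _ b)

/-- Monotonicity of the steepest descent slopeZ: if `+χ_i - χ_j` is a steepest descent
direction at `y` with `φ(y) < 0`, then `φ(y + χ_i - χ_j) ≥ φ(y)`; moreover every slopeZ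
at `y + χ_i - χ_j` is at least `φ(y)`, and a direction whose slopeZ at `y + χ_i - χ_j`
equals `φ(y)` is a steepest descent direction at `y + χ_i - χ_j`. -/
theorem statement1 {n : ℕ} (hn : 1 ≤ n) (f : (Fin n → ℤ) → EReal)
    (hbot : NoBot f) (hM : MConvexFn f)
    (y : Fin n → ℤ) (hy : f y ≠ ⊤) (hphi : phi f y < 0)
    (i j : Fin n) (hij : i ≠ j) (hd : slopeZ f y i j = phi f y) :
    phi f y ≤ phi f (y + chi i - chi j) ∧
    ∀ h k : Fin n, h ≠ k →
      phi f y ≤ slopeZ f (y + chi i - chi j) h k ∧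
      (slopeZ f (y + chi i - chi j) h k = phi f y →
        slopeZ f (y + chi i - chi j) h k = phi f (y + chi i - chi j)) := by
  obtain ⟨r, hr⟩ : ∃ r : ℝ, f y = r := exists_real (hbot y) hy
  set y' := y + chi i - chi j with hy'def
  obtain ⟨s, hs⟩ : ∃ s : ℝ, f y' = s := by
    refine exists_real (hbot y') (fun htop => ?_)
    rw [← hd] at hphi
    rw [slopeZ, ← hy'def, htop, hr, EReal.top_sub_coe] at hphi
    exact (not_top_lt hphi)
  set p : ℝ := s - r with hpdef
  have hp : phi f y = (p : EReal) := by
    rw [← hd, slopeZ, ← hy'def, hs, hr, ← EReal.coe_sub]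
  have hplt : p < 0 := by
    rw [hp] at hphi
    exact_mod_cast hphi
  -- every slope at y is ≥ p, hence value bound
  have hlow : ∀ a b : Fin n, ((r + p : ℝ) : EReal) ≤ f (y + chi a - chi b) := by
    intro a b
    have h1 : phi f y ≤ slopeZ f y a b := phi_le f y a b
    rw [hp, slopeZ, hr] at h1
    obtain hw | hw := eq_or_ne (f (y + chi a - chi b)) ⊤
    · rw [hw]; exact le_top
    obtain ⟨q, hq⟩ := exists_real (hbot _) hw
    rw [hq, ← EReal.coe_sub] at h1
    rw [hq]
    exact_mod_cast (by have := (EReal.coe_le_coe_iff).mp h1; linarith : r + p ≤ q)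
  have hsy' : f y' = ((r + p : ℝ) : EReal) := by
    rw [hs]; norm_cast; simp [hpdef]
  -- main: every slope at y' is ≥ p
  have key : ∀ h k : Fin n, (p : EReal) ≤ slopeZ f y' h k := by
    intro h k
    rw [slopeZ, hsy']
    obtain hw | hw := eq_or_ne (f (y' + chi h - chi k)) ⊤
    · rw [hw, EReal.top_sub_coe]; exact le_top
    obtain ⟨q, hq⟩ := exists_real (hbot _) hw
    rw [hq, ← EReal.coe_sub, EReal.coe_le_coe_iff]
    -- suffices q ≥ r + 2p
    suffices hq2 : r + 2 * p ≤ q by linarith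
    by_cases hhk : h = k
    · -- diagonal : y' + chi h - chi k = y'
      have he : y' + chi h - chi k = y' := by rw [hhk]; abel
      rw [he, hs] at hq
      have : q = s := by exact_mod_cast hq.symm
      rw [this, hpdef]; linarith
    by_cases hki : k = i
    · -- x = y + chi h - chi j
      have hx : y' + chi h - chi k = y + chi h - chi j := by rw [hki, hy'def]; abel
      have h2 := hlow h j
      rw [← hx, hq] at h2
      have : r + p ≤ q := by exact_mod_cast h2
      linarith
    · -- exchange argument
      have hxi : y i < (y' + chi h - chi k) i := by
        show y i < (y + chi i - chi j + chi h - chi k) i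
        simp only [Pi.add_apply, Pi.sub_apply, chi]
        have h1 : i ≠ j := hij
        have h2 : i ≠ k := fun e => hki e.symm
        split_ifs <;> omega
      have hxt : f (y' + chi h - chi k) ≠ ⊤ := hw
      obtain ⟨l, hl, hineq⟩ := hM.2 (y' + chi h - chi k) y hxt hy i hxi
      have hljk : l = j ∨ l = k := by
        by_contra hc
        push_neg at hc
        have hl' : (y + chi i - chi j + chi h - chi k) l < y l := hl
        simp only [Pi.add_apply, Pi.sub_apply, chi] at hl'
        have h1 : l ≠ j := hc.1
        have h2 : l ≠ k := hc.2
        split_ifs at hl' <;> omega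
      have hu : ((r + p : ℝ) : EReal) ≤ f (y' + chi h - chi k - chi i + chi l) := by
        rcases hljk with rfl | rfl
        · have he : y' + chi h - chi k - chi i + chi l = y + chi h - chi k := by
            rw [hy'def]; abel
          rw [he]; exact hlow h k
        · have he : y' + chi h - chi l - chi i + chi l = y + chi h - chi j := by
            rw [hy'def]; abel
          rw [he]; exact hlow h j
      have hv : ((r + p : ℝ) : EReal) ≤ f (y + chi i - chi l) := hlow i l
      rw [hq, hr] at hineq
      obtain hu' | hu' := eq_or_ne (f (y' + chi h - chi k - chi i + chi l)) ⊤
      · rw [hu', EReal.top_add_of_ne_bot (hbot _)] at hineq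
        exact absurd hineq (by rw [← EReal.coe_add]; exact fun hh => absurd hh (EReal.coe_lt_top _).not_ge)
      obtain hv' | hv' := eq_or_ne (f (y + chi i - chi l)) ⊤
      · rw [hv', EReal.add_top_of_ne_bot (hbot _)] at hineq
        exact absurd hineq (by rw [← EReal.coe_add]; exact fun hh => absurd hh (EReal.coe_lt_top _).not_ge)
      obtain ⟨u, hue⟩ := exists_real (hbot _) hu'
      obtain ⟨v, hve⟩ := exists_real (hbot _) hv'
      rw [hue, hve, ← EReal.coe_add, ← EReal.coe_add, EReal.coe_le_coe_iff] at hineq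
      rw [hue] at hu; rw [hve] at hv
      have hu2 : r + p ≤ u := by exact_mod_cast hu
      have hv2 : r + p ≤ v := by exact_mod_cast hv
      linarith
  -- conclude
  have hphile : phi f y ≤ phi f y' := by
    rw [hp]
    unfold phi
    exact le_iInf₂ fun h k => key h k
  refine ⟨hphile, fun h k _ => ⟨by rw [hp]; exact key h k, fun heq => ?_⟩⟩
  refine le_antisymm ?_ (phi_le f y' h k)
  rw [heq]
  exact hphile
end
end

section
/- Let f : ℤ^n → ℝ ∪ {+∞} be an M-convex function, c ∈ ℝ, y ∈ dom f, and let i, j ∈ N be distinct elements such that f'(y; i, j) > c. Then for every k ∈ N ∖ {i, j} with y + χ_i − χ_k ∈ dom f, it holds that f'(y + χ_i − χ_k; i, j) ≥ f'(y; i, j) > c. -/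
noncomputable section

open scoped BigOperators

lemma ereal_sub_mono {a b : EReal} {r s : ℝ} (h : a + (s : EReal) ≤ b + (r : EReal)) :
    a - (r : EReal) ≤ b - (s : EReal) := by
  rw [EReal.sub_le_iff_le_add (Or.inl (EReal.coe_ne_bot r)) (Or.inl (EReal.coe_ne_top r))]
  have : b - (s : EReal) + (r : EReal) = b + (r : EReal) - (s : EReal) := by
    rw [sub_eq_add_neg, sub_eq_add_neg, add_assoc, add_assoc, add_comm (-(s:EReal))]
  rw [this, EReal.le_sub_iff_add_le (Or.inl (EReal.coe_ne_bot s)) (Or.inl (EReal.coe_ne_top s))]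
  exact h

/-- If `f'(y; i, j) > c` and `y + χ_i - χ_k ∈ dom f` for some `k ∉ {i, j}`, then
`f'(y + χ_i - χ_k; i, j) ≥ f'(y; i, j) > c`. -/
theorem statement2 {n : ℕ} (hn : 1 ≤ n) (f : (Fin n → ℤ) → EReal)
    (hbot : NoBot f) (hM : MConvexFn f) (c : ℝ)
    (y : Fin n → ℤ) (hy : f y ≠ ⊤)
    (i j : Fin n) (hij : i ≠ j) (hd : (c : EReal) < slopeZ f y i j)
    (k : Fin n) (hki : k ≠ i) (hkj : k ≠ j)
    (hdom : f (y + chi i - chi k) ≠ ⊤) :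
    slopeZ f y i j ≤ slopeZ f (y + chi i - chi k) i j ∧
      (c : EReal) < slopeZ f (y + chi i - chi k) i j := by
  set y' : Fin n → ℤ := y + chi i - chi k with hy'
  set x : Fin n → ℤ := y' + chi i - chi j with hx
  have key : slopeZ f y i j ≤ slopeZ f y' i j := by
    by_cases hxtop : f x = ⊤
    · unfold slopeZ
      rw [hxtop]
      lift f y' to ℝ using ⟨hdom, hbot y'⟩ with r hr
      rw [EReal.top_sub_coe]
      exact le_top
    · have hxi : y i < x i := by
        simp [hx, hy', chi, hij, Ne.symm hki]
      obtain ⟨m, hm, hineq⟩ := hM.2 x y hxtop hy i hxi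
      have hmjk : m = j ∨ m = k := by
        by_contra hc
        push_neg at hc
        have : x m = y m + (if m = i then 2 else 0) := by
          simp only [hx, hy', Pi.add_apply, Pi.sub_apply, chi, if_neg hc.1, if_neg hc.2]
          split_ifs <;> omega
        rw [this] at hm
        split_ifs at hm <;> omega
      have hkey : f (y + chi i - chi j) + f y' ≤ f x + f y := by
        rcases hmjk with rfl | rfl
        · have e1 : x - chi i + chi m = y' := by
            funext t
            simp only [hx, hy', Pi.add_apply, Pi.sub_apply, chi]
            split_ifs <;> ring
          rw [e1] at hineq
          calc f (y + chi i - chi m) + f y' = f y' + f (y + chi i - chi m) := add_comm _ _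
            _ ≤ f x + f y := hineq
        · have e1 : x - chi i + chi m = y + chi i - chi j := by
            funext t
            simp only [hx, hy', Pi.add_apply, Pi.sub_apply, chi]
            split_ifs <;> ring
          rw [e1, ← hy'] at hineq
          exact hineq
      unfold slopeZ
      lift f y to ℝ using ⟨hy, hbot y⟩ with r hr
      lift f y' to ℝ using ⟨hdom, hbot y'⟩ with s hs
      exact ereal_sub_mono hkey
  exact ⟨key, lt_of_lt_of_le hd key⟩
end
end

section
/- Let f : ℤ^n → ℝ ∪ {+∞} be an M-convex function with bounded dom f, let R ⊆ N with ∅ ≠ R ⊊ N, and let k be an integer with k̲ ≤ k < k̄. Let x ∈ M(k), and suppose i ∈ R and j ∈ N ∖ R minimize the value f'(x; i, j) over all pairs in R × (N ∖ R). Then x + χ_i − χ_j ∈ M(k+1). -/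
noncomputable section

open scoped BigOperators

/-- Bounded effective domain. -/
def BddDom {n : ℕ} (f : (Fin n → ℤ) → EReal) : Prop :=
  ∃ C : ℤ, ∀ x : Fin n → ℤ, f x ≠ ⊤ → ∀ i, |x i| ≤ C

/-- `x(R) = Σ_{i ∈ R} x(i)`. -/
def sumR {n : ℕ} (R : Finset (Fin n)) (x : Fin n → ℤ) : ℤ := ∑ i ∈ R, x i

/-- `k̲ = min { x(R) : x ∈ dom f }`. -/
def kmin {n : ℕ} (f : (Fin n → ℤ) → EReal) (R : Finset (Fin n)) : ℤ :=
  sInf {r : ℤ | ∃ x, f x ≠ ⊤ ∧ sumR R x = r}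

/-- `k̄ = max { x(R) : x ∈ dom f }`. -/
def kmax {n : ℕ} (f : (Fin n → ℤ) → EReal) (R : Finset (Fin n)) : ℤ :=
  sSup {r : ℤ | ∃ x, f x ≠ ⊤ ∧ sumR R x = r}

/-- `M(k)`: the set of minimizers of `f` over `{x ∈ dom f : x(R) = k}`. -/
def Mset {n : ℕ} (f : (Fin n → ℤ) → EReal) (R : Finset (Fin n)) (k : ℤ) :
    Set (Fin n → ℤ) :=
  {x | f x ≠ ⊤ ∧ sumR R x = k ∧ ∀ y : Fin n → ℤ, f y ≠ ⊤ → sumR R y = k → f x ≤ f y}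

/-- `z(k) = min { f(x) : x ∈ dom f, x(R) = k }`. -/
def zval {n : ℕ} (f : (Fin n → ℤ) → EReal) (R : Finset (Fin n)) (k : ℤ) : EReal :=
  ⨅ (x : Fin n → ℤ) (_ : f x ≠ ⊤ ∧ sumR R x = k), f x

/-- `φ^R(x) = min { f'(x; i, j) : i ∈ R, j ∈ N ∖ R }`. -/
def phiR {n : ℕ} (f : (Fin n → ℤ) → EReal) (R : Finset (Fin n)) (x : Fin n → ℤ) : EReal :=
  ⨅ i ∈ R, ⨅ j ∈ Rᶜ, slopeZ f x i j

lemma sum_chi' {n : ℕ} (R : Finset (Fin n)) (a : Fin n) :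
    ∑ m ∈ R, chi a m = if a ∈ R then 1 else 0 := by
  simp only [chi]
  rw [Finset.sum_ite_eq' R a (fun _ => (1 : ℤ))]

lemma sumR_update' {n : ℕ} (R : Finset (Fin n)) (y : Fin n → ℤ) (a b : Fin n) :
    sumR R (y + chi a - chi b)
      = sumR R y + (if a ∈ R then 1 else 0) - (if b ∈ R then 1 else 0) := by
  simp only [sumR, Pi.sub_apply, Pi.add_apply, Finset.sum_sub_distrib,
    Finset.sum_add_distrib, sum_chi']

lemma ereal_cancel_right {a b c : EReal} (h1 : c ≠ ⊥) (h2 : c ≠ ⊤)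
    (h : a + c ≤ b + c) : a ≤ b := by
  lift c to ℝ using ⟨h2, h1⟩
  exact (EReal.addLECancellable_coe c).add_le_add_iff_right.1 h

lemma ereal_sub_cancel {a b c : EReal} (h1 : c ≠ ⊥) (h2 : c ≠ ⊤)
    (h : a - c ≤ b - c) : a ≤ b := by
  lift c to ℝ using ⟨h2, h1⟩
  have h' := add_le_add_left h (c : EReal)
  rwa [EReal.sub_add_cancel, EReal.sub_add_cancel] at h'

lemma ereal_left_ne_top {a b c : EReal} (hab : a + b ≤ c) (hc : c ≠ ⊤) (hb : b ≠ ⊥) :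
    a ≠ ⊤ := by
  intro h
  rw [h, EReal.top_add_of_ne_bot hb] at hab
  exact hc (top_le_iff.1 hab)

lemma dist_decrease {n : ℕ} (x y : Fin n → ℤ) (a b : Fin n)
    (ha : x a < y a) (hb : y b < x b) :
    ∑ m, ((y - chi a + chi b) m - x m).natAbs < ∑ m, (y m - x m).natAbs := by
  have hab : a ≠ b := by intro h; subst h; omega
  have hv : ∀ m, (y - chi a + chi b) m
      = y m - (if m = a then 1 else 0) + (if m = b then 1 else 0) := by
    intro m; simp [chi]
  have hpt : ∀ m, ((y - chi a + chi b) m - x m).natAbs ≤ (y m - x m).natAbs := by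
    intro m
    rw [hv m]
    by_cases h1 : m = a
    · subst h1
      rw [if_pos rfl, if_neg hab]
      omega
    · by_cases h2 : m = b
      · subst h2
        rw [if_neg h1, if_pos rfl]
        omega
      · rw [if_neg h1, if_neg h2]
        omega
  have hstrict : ((y - chi a + chi b) a - x a).natAbs < (y a - x a).natAbs := by
    rw [hv a, if_pos rfl, if_neg hab]
    omega
  exact Finset.sum_lt_sum (fun m _ => hpt m) ⟨a, Finset.mem_univ a, hstrict⟩

/-- If `x ∈ M(k)` and `(i, j) ∈ R × (N ∖ R)` minimizes `f'(x; i, j)`, then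
`x + χ_i - χ_j ∈ M(k+1)`. -/
theorem statement5 {n : ℕ} (hn : 1 ≤ n) (f : (Fin n → ℤ) → EReal)
    (hbot : NoBot f) (hM : MConvexFn f) (hbdd : BddDom f)
    (R : Finset (Fin n)) (hR : R.Nonempty) (hRp : R ≠ Finset.univ)
    (k : ℤ) (hk1 : kmin f R ≤ k) (hk2 : k < kmax f R)
    (x : Fin n → ℤ) (hx : x ∈ Mset f R k)
    (i j : Fin n) (hi : i ∈ R) (hj : j ∉ R)
    (hminimal : ∀ i' ∈ R, ∀ j' ∉ R, slopeZ f x i j ≤ slopeZ f x i' j') :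
    x + chi i - chi j ∈ Mset f R (k + 1) := by
  obtain ⟨hxt, hxk, hxmin⟩ := hx
  have hxb : f x ≠ ⊥ := hbot x
  -- key claim: for every y in dom f at level k+1, f (x + χi - χj) ≤ f y
  have key : ∀ d : ℕ, ∀ y : Fin n → ℤ, f y ≠ ⊤ → sumR R y = k + 1 →
      (∑ m, (y m - x m).natAbs) ≤ d → f (x + chi i - chi j) ≤ f y := by
    intro d
    induction d with
    | zero =>
      intro y hy hyk hd
      exfalso
      have hyx : y = x := by
        funext m
        have h0 : (y m - x m).natAbs = 0 := by
          have := Finset.sum_eq_zero_iff.1 (Nat.le_zero.1 hd) m (Finset.mem_univ m)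
          exact this
        omega
      rw [hyx, hxk] at hyk
      omega
    | succ d ih =>
      intro y hy hyk hd
      -- find i' ∈ R with x i' < y i'
      obtain ⟨i', hi'R, hi'lt⟩ : ∃ i' ∈ R, x i' < y i' := by
        apply Finset.exists_lt_of_sum_lt
        show sumR R x < sumR R y
        omega
      obtain ⟨j', hj'lt, hexc⟩ := hM.2 y x hy hxt i' hi'lt
      set y' := y - chi i' + chi j' with hy'def
      set x' := x + chi i' - chi j' with hx'def
      have hyb : f y ≠ ⊥ := hbot y
      have hsum_top : f y + f x ≠ ⊤ := (EReal.add_lt_top hy hxt).ne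
      have hy't : f y' ≠ ⊤ := ereal_left_ne_top hexc hsum_top (hbot x')
      have hx't : f x' ≠ ⊤ := by
        rw [add_comm] at hexc
        exact ereal_left_ne_top hexc hsum_top (hbot y')
      have hy'eq : y' = y + chi j' - chi i' := by
        funext m; simp only [hy'def, Pi.add_apply, Pi.sub_apply]; ring
      have hsumy' : sumR R y' = sumR R y + (if j' ∈ R then 1 else 0) - 1 := by
        rw [hy'eq, sumR_update', if_pos hi'R]
      have hsumx' : sumR R x' = sumR R x + 1 - (if j' ∈ R then 1 else 0) := by
        rw [hx'def, sumR_update', if_pos hi'R]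
      by_cases hj'R : j' ∈ R
      · -- sumR y' = k+1, recurse
        have hy'k : sumR R y' = k + 1 := by rw [hsumy', if_pos hj'R]; omega
        have hx'k : sumR R x' = k := by rw [hsumx', if_pos hj'R]; omega
        have hfx' : f x ≤ f x' := hxmin x' hx't hx'k
        have hy'le : f y' ≤ f y := by
          refine ereal_cancel_right hxb hxt ?_
          calc f y' + f x ≤ f y' + f x' := add_le_add_right hfx' _
            _ ≤ f y + f x := hexc
        have hdist : (∑ m, (y' m - x m).natAbs) ≤ d := by
          rw [hy'def]
          have := dist_decrease x y i' j' hi'lt hj'lt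
          omega
        exact (ih y' hy't hy'k hdist).trans hy'le
      · -- direct case
        have hy'k : sumR R y' = k := by rw [hsumy', if_neg hj'R]; omega
        have hfy' : f x ≤ f y' := hxmin y' hy't hy'k
        have hx'le : f x' ≤ f y := by
          refine ereal_cancel_right hxb hxt ?_
          calc f x' + f x = f x + f x' := by rw [add_comm]
            _ ≤ f y' + f x' := add_le_add_left hfy' _
            _ ≤ f y + f x := hexc
        have hslope := hminimal i' hi'R j' hj'R
        have hle : f (x + chi i - chi j) ≤ f x' :=
          ereal_sub_cancel hxb hxt hslope
        exact hle.trans hx'le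
  -- existence of a point at level k+1
  have hS : {r : ℤ | ∃ z, f z ≠ ⊤ ∧ sumR R z = r}.Nonempty := ⟨k, x, hxt, hxk⟩
  obtain ⟨C, hC⟩ := hbdd
  have hbdd' : BddAbove {r : ℤ | ∃ z, f z ≠ ⊤ ∧ sumR R z = r} := by
    refine ⟨R.card • C, ?_⟩
    rintro r ⟨z, hz, rfl⟩
    exact Finset.sum_le_card_nsmul R z C fun m _ => (le_abs_self _).trans (hC z hz m)
  have hkmax_mem : kmax f R ∈ {r : ℤ | ∃ z, f z ≠ ⊤ ∧ sumR R z = r} :=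
    Int.csSup_mem hS hbdd'
  obtain ⟨z0, hz0t, hz0k⟩ := hkmax_mem
  have hz0ge : k + 1 ≤ sumR R z0 := by rw [hz0k]; omega
  have hexist : ∀ d : ℕ, ∀ z : Fin n → ℤ, f z ≠ ⊤ → k + 1 ≤ sumR R z →
      (∑ m, (z m - x m).natAbs) ≤ d → ∃ y, f y ≠ ⊤ ∧ sumR R y = k + 1 := by
    intro d
    induction d with
    | zero =>
      intro z hz hzk hd
      exfalso
      have hzx : z = x := by
        funext m
        have h0 : (z m - x m).natAbs = 0 :=
          Finset.sum_eq_zero_iff.1 (Nat.le_zero.1 hd) m (Finset.mem_univ m)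
        omega
      rw [hzx, hxk] at hzk
      omega
    | succ d ih =>
      intro z hz hzk hd
      rcases eq_or_lt_of_le hzk with h | h
      · exact ⟨z, hz, h.symm⟩
      · obtain ⟨i', hi'R, hi'lt⟩ : ∃ i' ∈ R, x i' < z i' := by
          apply Finset.exists_lt_of_sum_lt
          show sumR R x < sumR R z
          omega
        obtain ⟨j', hj'lt, hexc⟩ := hM.2 z x hz hxt i' hi'lt
        set z' := z - chi i' + chi j' with hz'def
        have hsum_top : f z + f x ≠ ⊤ := (EReal.add_lt_top hz hxt).ne
        have hz't : f z' ≠ ⊤ :=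
          ereal_left_ne_top hexc hsum_top (hbot (x + chi i' - chi j'))
        have hz'eq : z' = z + chi j' - chi i' := by
          funext m; simp only [hz'def, Pi.add_apply, Pi.sub_apply]; ring
        have hsumz' : sumR R z' = sumR R z + (if j' ∈ R then 1 else 0) - 1 := by
          rw [hz'eq, sumR_update', if_pos hi'R]
        have hz'ge : k + 1 ≤ sumR R z' := by
          rw [hsumz']; split <;> omega
        have hdist : (∑ m, (z' m - x m).natAbs) ≤ d := by
          rw [hz'def]
          have := dist_decrease x z i' j' hi'lt hj'lt
          omega
        exact ih z' hz't hz'ge hdist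
  obtain ⟨y0, hy0t, hy0k⟩ :=
    hexist (∑ m, (z0 m - x m).natAbs) z0 hz0t hz0ge le_rfl
  have hmain : f (x + chi i - chi j) ≤ f y0 :=
    key (∑ m, (y0 m - x m).natAbs) y0 hy0t hy0k le_rfl
  refine ⟨ne_top_of_le_ne_top hy0t hmain, ?_, ?_⟩
  · rw [sumR_update', if_pos hi, if_neg hj, hxk]; ring
  · intro y hy hyk
    exact key (∑ m, (y m - x m).natAbs) y hy hyk le_rfl
end
end

section
/- Let f : ℤ^n → ℝ ∪ {+∞} be an M-convex function with bounded dom f, let R ⊆ N with ∅ ≠ R ⊊ N, and let k be an integer with k̲ ≤ k ≤ k̄ − 2. Let x ∈ M(k), and let i ∈ R and j ∈ N ∖ R minimize f'(x; i, j) over R × (N ∖ R). If f'(x + χ_i − χ_j; i, j) = f'(x; i, j), then f'(x + χ_i − χ_j; i, j) ≤ f'(x + χ_i − χ_j; h, ℓ) for all h ∈ R and ℓ ∈ N ∖ R, and x + 2χ_i − 2χ_j ∈ M(k+2). -/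
noncomputable section

open scoped BigOperators

lemma sumR_add_chi {n : ℕ} (R : Finset (Fin n)) (y : Fin n → ℤ) (t : Fin n) :
    sumR R (y + chi t) = sumR R y + (if t ∈ R then 1 else 0) := by
  unfold sumR chi
  simp only [Pi.add_apply]
  rw [Finset.sum_add_distrib, Finset.sum_ite_eq' R t (fun _ => (1:ℤ))]

lemma sumR_sub_chi {n : ℕ} (R : Finset (Fin n)) (y : Fin n → ℤ) (t : Fin n) :
    sumR R (y - chi t) = sumR R y - (if t ∈ R then 1 else 0) := by
  unfold sumR chi
  simp only [Pi.sub_apply]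
  rw [Finset.sum_sub_distrib, Finset.sum_ite_eq' R t (fun _ => (1:ℤ))]

lemma sumR_asb {n : ℕ} (R : Finset (Fin n)) (y : Fin n → ℤ) (p q : Fin n) :
    sumR R (y + chi p - chi q)
      = sumR R y + (if p ∈ R then 1 else 0) - (if q ∈ R then 1 else 0) := by
  rw [sumR_sub_chi, sumR_add_chi]

lemma sumR_sba {n : ℕ} (R : Finset (Fin n)) (y : Fin n → ℤ) (p q : Fin n) :
    sumR R (y - chi p + chi q)
      = sumR R y - (if p ∈ R then 1 else 0) + (if q ∈ R then 1 else 0) := by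
  rw [sumR_add_chi, sumR_sub_chi]

lemma ecancel {a b : EReal} (d : ℝ) (h : a + (d:EReal) ≤ b + (d:EReal)) : a ≤ b := by
  have := EReal.sub_le_sub h (le_refl (d:EReal))
  rwa [EReal.add_sub_cancel_right, EReal.add_sub_cancel_right] at this

lemma parts_ne_top {a b c : EReal} (h : a + b ≤ c) (hc : c ≠ ⊤) (ha : a ≠ ⊥) (hb : b ≠ ⊥) :
    a ≠ ⊤ ∧ b ≠ ⊤ := by
  constructor
  · intro hA; rw [hA, EReal.top_add_of_ne_bot hb] at h; exact hc (top_le_iff.1 h)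
  · intro hB; rw [hB, add_comm, EReal.top_add_of_ne_bot ha] at h; exact hc (top_le_iff.1 h)

lemma exists_gt {n : ℕ} {R : Finset (Fin n)} {x y : Fin n → ℤ} (h : sumR R x < sumR R y) :
    ∃ i ∈ R, x i < y i := by
  by_contra hc
  push_neg at hc
  exact absurd (Finset.sum_le_sum hc) (not_le.2 h)

lemma measure_dec {n : ℕ} {x y : Fin n → ℤ} {p q : Fin n} (hp : x p < y p) (hq : y q < x q) :
    ∑ r, ((y - chi p + chi q) r - x r).toNat < ∑ r, (y r - x r).toNat := by
  have hpq : p ≠ q := by intro h; rw [h] at hp; omega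
  apply Finset.sum_lt_sum
  · intro r _
    simp only [Pi.add_apply, Pi.sub_apply, chi]
    split_ifs <;> subst_vars <;> omega
  · refine ⟨p, Finset.mem_univ p, ?_⟩
    simp [chi, hpq]
    omega

/-- Lemma A: from `x ∈ M(k)` and any `y ∈ dom f` with `y(R) = k+1`, there is a step
`x + χ_{i'} - χ_{j'}` with `i' ∈ R`, `j' ∉ R` whose value is at most `f y`. -/
lemma lemA {n : ℕ} {f : (Fin n → ℤ) → EReal} (hbot : NoBot f) (hM : MConvexFn f)
    {R : Finset (Fin n)} {k : ℤ} {x : Fin n → ℤ} (hx : x ∈ Mset f R k) :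
    ∀ (m : ℕ) (y : Fin n → ℤ), f y ≠ ⊤ → sumR R y = k + 1 →
      (∑ r, (y r - x r).toNat) = m →
      ∃ i' ∈ R, ∃ j', j' ∉ R ∧ f (x + chi i' - chi j') ≤ f y := by
  obtain ⟨hfx, hxs, hxmin⟩ := hx
  have hax : ((f x).toReal : EReal) = f x := EReal.coe_toReal hfx (hbot x)
  intro m
  induction m using Nat.strong_induction_on with
  | _ m IH =>
    intro y hy hys hm
    obtain ⟨i', hi'R, hlt⟩ := exists_gt (R := R) (x := x) (y := y) (by omega)
    obtain ⟨j', hj'lt, hineq⟩ := hM.2 y x hy hfx i' hlt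
    obtain ⟨hy't, hx't⟩ :=
      parts_ne_top hineq (EReal.add_lt_top hy hfx).ne (hbot _) (hbot _)
    by_cases hj'R : j' ∈ R
    · -- stay at level k+1, recurse
      have hys' : sumR R (y - chi i' + chi j') = k + 1 := by
        rw [sumR_sba, if_pos hi'R, if_pos hj'R]; omega
      have hxlow : sumR R (x + chi i' - chi j') = k := by
        rw [sumR_asb, if_pos hi'R, if_pos hj'R]; omega
      have h1 : f x ≤ f (x + chi i' - chi j') := hxmin _ hx't hxlow
      have h2 : f (y - chi i' + chi j') ≤ f y := by
        apply ecancel (f x).toReal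
        rw [hax]
        calc f (y - chi i' + chi j') + f x
            ≤ f (y - chi i' + chi j') + f (x + chi i' - chi j') := add_le_add_right h1 _
          _ ≤ f y + f x := hineq
      obtain ⟨i'', hi'', j'', hj'', hle⟩ :=
        IH _ (hm ▸ measure_dec hlt hj'lt) (y - chi i' + chi j') hy't hys' rfl
      exact ⟨i'', hi'', j'', hj'', hle.trans h2⟩
    · -- found the step
      have hys' : sumR R (y - chi i' + chi j') = k := by
        rw [sumR_sba, if_pos hi'R, if_neg hj'R]; omega
      have h1 : f x ≤ f (y - chi i' + chi j') := hxmin _ hy't hys'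
      have h2 : f (x + chi i' - chi j') ≤ f y := by
        apply ecancel (f x).toReal
        rw [hax]
        calc f (x + chi i' - chi j') + f x
            = f x + f (x + chi i' - chi j') := add_comm _ _
          _ ≤ f (y - chi i' + chi j') + f (x + chi i' - chi j') := add_le_add_left h1 _
          _ ≤ f y + f x := hineq
      exact ⟨i', hi'R, j', hj'R, h2⟩

/-- Lemma B: from `x ∈ M(k)` and `y ∈ dom f` with `y(R) = k+2`, there are two points at
level `k+1` whose total value is at most `f x + f y`. -/
lemma lemB {n : ℕ} {f : (Fin n → ℤ) → EReal} (hbot : NoBot f) (hM : MConvexFn f)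
    {R : Finset (Fin n)} {k : ℤ} {x : Fin n → ℤ} (hx : x ∈ Mset f R k) :
    ∀ (m : ℕ) (y : Fin n → ℤ), f y ≠ ⊤ → sumR R y = k + 2 →
      (∑ r, (y r - x r).toNat) = m →
      ∃ p q : Fin n → ℤ, f p ≠ ⊤ ∧ f q ≠ ⊤ ∧ sumR R p = k + 1 ∧ sumR R q = k + 1 ∧
        f p + f q ≤ f x + f y := by
  obtain ⟨hfx, hxs, hxmin⟩ := hx
  have hax : ((f x).toReal : EReal) = f x := EReal.coe_toReal hfx (hbot x)
  intro m
  induction m using Nat.strong_induction_on with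
  | _ m IH =>
    intro y hy hys hm
    obtain ⟨i', hi'R, hlt⟩ := exists_gt (R := R) (x := x) (y := y) (by omega)
    obtain ⟨j', hj'lt, hineq⟩ := hM.2 y x hy hfx i' hlt
    obtain ⟨hy't, hx't⟩ :=
      parts_ne_top hineq (EReal.add_lt_top hy hfx).ne (hbot _) (hbot _)
    by_cases hj'R : j' ∈ R
    · have hys' : sumR R (y - chi i' + chi j') = k + 2 := by
        rw [sumR_sba, if_pos hi'R, if_pos hj'R]; omega
      have hxlow : sumR R (x + chi i' - chi j') = k := by
        rw [sumR_asb, if_pos hi'R, if_pos hj'R]; omega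
      have h1 : f x ≤ f (x + chi i' - chi j') := hxmin _ hx't hxlow
      have h2 : f (y - chi i' + chi j') ≤ f y := by
        apply ecancel (f x).toReal
        rw [hax]
        calc f (y - chi i' + chi j') + f x
            ≤ f (y - chi i' + chi j') + f (x + chi i' - chi j') := add_le_add_right h1 _
          _ ≤ f y + f x := hineq
      obtain ⟨p, q, hpt, hqt, hps, hqs, hpq⟩ :=
        IH _ (hm ▸ measure_dec hlt hj'lt) (y - chi i' + chi j') hy't hys' rfl
      exact ⟨p, q, hpt, hqt, hps, hqs, hpq.trans (add_le_add_right h2 _)⟩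
    · have hys' : sumR R (y - chi i' + chi j') = k + 1 := by
        rw [sumR_sba, if_pos hi'R, if_neg hj'R]; omega
      have hxs' : sumR R (x + chi i' - chi j') = k + 1 := by
        rw [sumR_asb, if_pos hi'R, if_neg hj'R]; omega
      exact ⟨_, _, hy't, hx't, hys', hxs', hineq.trans_eq (add_comm _ _)⟩

/-- Lemma C: intermediate level `u(R)+1` is attained in `dom f`. -/
lemma lemC {n : ℕ} {f : (Fin n → ℤ) → EReal} (hbot : NoBot f) (hM : MConvexFn f)
    {R : Finset (Fin n)} {u : Fin n → ℤ} (hu : f u ≠ ⊤) :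
    ∀ (m : ℕ) (v : Fin n → ℤ), f v ≠ ⊤ → sumR R u < sumR R v →
      (∑ r, (v r - u r).toNat) = m →
      ∃ w : Fin n → ℤ, f w ≠ ⊤ ∧ sumR R w = sumR R u + 1 := by
  intro m
  induction m using Nat.strong_induction_on with
  | _ m IH =>
    intro v hv hlt hm
    obtain ⟨i', hi'R, hult⟩ := exists_gt (R := R) (x := u) (y := v) hlt
    obtain ⟨j', hj'lt, hineq⟩ := hM.2 v u hv hu i' hult
    obtain ⟨hv't, hu't⟩ :=
      parts_ne_top hineq (EReal.add_lt_top hv hu).ne (hbot _) (hbot _)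
    by_cases hj'R : j' ∈ R
    · have hvs' : sumR R (v - chi i' + chi j') = sumR R v := by
        rw [sumR_sba, if_pos hi'R, if_pos hj'R]; omega
      exact IH _ (hm ▸ measure_dec hult hj'lt) (v - chi i' + chi j') hv't (hvs' ▸ hlt) rfl
    · refine ⟨u + chi i' - chi j', hu't, ?_⟩
      rw [sumR_asb, if_pos hi'R, if_neg hj'R]; omega

/-- Long-step property: if `x ∈ M(k)`, `(i, j) ∈ R × (N ∖ R)` minimizes `f'(x; ·, ·)`,
and the slopeZ in direction `+χ_i - χ_j` stays the same after one step, then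
`+χ_i - χ_j` is still a minimizing direction at `x + χ_i - χ_j` and
`x + 2χ_i - 2χ_j ∈ M(k+2)`. -/
theorem statement7 {n : ℕ} (hn : 1 ≤ n) (f : (Fin n → ℤ) → EReal)
    (hbot : NoBot f) (hM : MConvexFn f) (hbdd : BddDom f)
    (R : Finset (Fin n)) (hR : R.Nonempty) (hRp : R ≠ Finset.univ)
    (k : ℤ) (hk1 : kmin f R ≤ k) (hk2 : k ≤ kmax f R - 2)
    (x : Fin n → ℤ) (hx : x ∈ Mset f R k)
    (i j : Fin n) (hi : i ∈ R) (hj : j ∉ R)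
    (hminimal : ∀ i' ∈ R, ∀ j' ∉ R, slopeZ f x i j ≤ slopeZ f x i' j')
    (hsame : slopeZ f (x + chi i - chi j) i j = slopeZ f x i j) :
    (∀ h ∈ R, ∀ l ∉ R,
        slopeZ f (x + chi i - chi j) i j ≤ slopeZ f (x + chi i - chi j) h l) ∧
      x + (2 : ℤ) • chi i - (2 : ℤ) • chi j ∈ Mset f R (k + 2) := by
  have hfx : f x ≠ ⊤ := hx.1
  have hxs : sumR R x = k := hx.2.1
  set a : ℝ := (f x).toReal with hadef
  have ha : ((a : ℝ) : EReal) = f x := EReal.coe_toReal hfx (hbot x)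
  -- the maximum level is attained
  have hSne : Set.Nonempty {r : ℤ | ∃ w, f w ≠ ⊤ ∧ sumR R w = r} := ⟨k, x, hfx, hxs⟩
  have hSbdd : BddAbove {r : ℤ | ∃ w, f w ≠ ⊤ ∧ sumR R w = r} := by
    obtain ⟨C, hC⟩ := hbdd
    refine ⟨(R.card : ℤ) * C, ?_⟩
    rintro r ⟨w, hw, rfl⟩
    calc sumR R w ≤ ∑ i ∈ R, C := Finset.sum_le_sum (fun i _ => (abs_le.1 (hC w hw i)).2)
      _ = R.card * C := by rw [Finset.sum_const, nsmul_eq_mul]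
  obtain ⟨v, hvt, hvs⟩ := Int.csSup_mem hSne hSbdd
  -- a point at level k+1
  have hkv : sumR R x < sumR R v := by rw [hxs, hvs]; unfold kmax at hk2; omega
  obtain ⟨y1, hy1t, hy1s⟩ := lemC hbot hM hfx _ v hvt hkv rfl
  rw [hxs] at hy1s
  -- x + χ_i - χ_j is a minimizer at level k+1
  have hM1 : ∀ y, f y ≠ ⊤ → sumR R y = k + 1 → f (x + chi i - chi j) ≤ f y := by
    intro y hyt hys
    obtain ⟨i', hi', j', hj', hle⟩ := lemA hbot hM hx _ y hyt hys rfl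
    have hs := hminimal i' hi' j' hj'
    unfold slopeZ at hs
    rw [← ha] at hs
    calc f (x + chi i - chi j)
        = f (x + chi i - chi j) - (a : EReal) + (a : EReal) :=
          EReal.sub_add_cancel.symm
      _ ≤ f (x + chi i' - chi j') - (a : EReal) + (a : EReal) := add_le_add_left hs _
      _ = f (x + chi i' - chi j') := EReal.sub_add_cancel
      _ ≤ f y := hle
  have hx1t : f (x + chi i - chi j) ≠ ⊤ := ne_top_of_le_ne_top hy1t (hM1 y1 hy1t hy1s)
  set b : ℝ := (f (x + chi i - chi j)).toReal with hbdef
  have hb : ((b : ℝ) : EReal) = f (x + chi i - chi j) := EReal.coe_toReal hx1t (hbot _)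
  -- the value after two steps
  have hkey : f (x + chi i - chi j + chi i - chi j) - (b : EReal) = (b : EReal) - (a : EReal) := by
    have h0 := hsame
    unfold slopeZ at h0
    rw [← ha, ← hb] at h0
    exact h0
  have hfx2 : f (x + chi i - chi j + chi i - chi j) = ((b - a + b : ℝ) : EReal) := by
    calc f (x + chi i - chi j + chi i - chi j)
        = f (x + chi i - chi j + chi i - chi j) - (b : EReal) + (b : EReal) :=
          EReal.sub_add_cancel.symm
      _ = ((b : EReal) - (a : EReal)) + (b : EReal) := by rw [hkey]
      _ = ((b - a + b : ℝ) : EReal) := by norm_cast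
  -- sums
  have hs1 : sumR R (x + chi i - chi j) = k + 1 := by
    rw [sumR_asb, if_pos hi, if_neg hj, hxs]; ring
  have hs2 : sumR R (x + chi i - chi j + chi i - chi j) = k + 2 := by
    rw [sumR_asb, if_pos hi, if_neg hj, hs1]; ring
  -- minimality at level k+2
  have hmin2 : ∀ y, f y ≠ ⊤ → sumR R y = k + 2 →
      f (x + chi i - chi j + chi i - chi j) ≤ f y := by
    intro y hyt hys
    obtain ⟨p, q, hpt, hqt, hps, hqs, hpq⟩ := lemB hbot hM hx _ y hyt hys rfl
    have h1 : ((b : EReal) + (b : EReal)) ≤ (a : EReal) + f y := by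
      calc ((b : EReal) + (b : EReal)) = f (x + chi i - chi j) + f (x + chi i - chi j) := by
            rw [hb]
        _ ≤ f p + f q := add_le_add (hM1 p hpt hps) (hM1 q hqt hqs)
        _ ≤ f x + f y := hpq
        _ = (a : EReal) + f y := by rw [ha]
    have h2 : ((b : EReal) + (b : EReal)) - (a : EReal) ≤ f y := EReal.sub_le_of_le_add' h1
    rw [hfx2]
    calc ((b - a + b : ℝ) : EReal) = ((b : EReal) + (b : EReal)) - (a : EReal) := by
          norm_cast; ring
      _ ≤ f y := h2
  have hx2eq : x + (2 : ℤ) • chi i - (2 : ℤ) • chi j = x + chi i - chi j + chi i - chi j := by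
    funext r
    simp only [Pi.add_apply, Pi.sub_apply, Pi.smul_apply, smul_eq_mul, chi]
    split_ifs <;> ring
  constructor
  · intro h hh l hl
    by_cases hwt : f (x + chi i - chi j + chi h - chi l) = ⊤
    · unfold slopeZ
      rw [hwt, ← hb, EReal.top_sub_coe]
      exact le_top
    · have hws : sumR R (x + chi i - chi j + chi h - chi l) = k + 2 := by
        rw [sumR_asb, if_pos hh, if_neg hl, hs1]; ring
      have h1 := hmin2 _ hwt hws
      unfold slopeZ
      exact EReal.sub_le_sub h1 (le_refl _)
  · rw [hx2eq]
    exact ⟨by rw [hfx2]; exact EReal.coe_ne_top _, hs2, hmin2⟩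
end
end

section
/- Let f : ℤ^n → ℝ ∪ {+∞} be an M-convex function with bounded dom f and R ⊆ N with ∅ ≠ R ⊊ N. Let c ∈ ℝ, let y ∈ dom f, and let i ∈ R be an element satisfying f'(y; i, j) > c for every j ∈ N ∖ R. Also let h ∈ R and k ∈ N ∖ R be elements such that f'(y; h, k) = c = φ^R(y). Then f'(y + χ_h − χ_k; i, j) > c holds for every j ∈ N ∖ R. -/
noncomputable section

open scoped BigOperators

private lemma ereal_contra (u v : EReal) (hu : u ≠ ⊥) (hv : v ≠ ⊥) (a c : ℝ)
    (h1 : (c : EReal) ≤ u - (a : ℝ)) (h2 : (c : EReal) < v - (a : ℝ))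
    (h3 : u + v ≤ ((2*a + 2*c : ℝ) : EReal)) : False := by
  have hut : u ≠ ⊤ := by
    intro e
    rw [e, EReal.top_add_of_ne_bot hv, top_le_iff] at h3
    exact EReal.coe_ne_top _ h3
  have hvt : v ≠ ⊤ := by
    intro e
    rw [e, EReal.add_top_of_ne_bot hu, top_le_iff] at h3
    exact EReal.coe_ne_top _ h3
  lift u to ℝ using ⟨hut, hu⟩
  lift v to ℝ using ⟨hvt, hv⟩
  rw [← EReal.coe_sub, EReal.coe_le_coe_iff] at h1
  rw [← EReal.coe_sub, EReal.coe_lt_coe_iff] at h2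
  rw [← EReal.coe_add, EReal.coe_le_coe_iff] at h3
  linarith

/-- If `i ∈ R` satisfies `f'(y; i, j) > c` for every `j ∈ N ∖ R`, and `h ∈ R`,
`k ∈ N ∖ R` satisfy `f'(y; h, k) = c = φ^R(y)`, then `f'(y + χ_h - χ_k; i, j) > c` for
every `j ∈ N ∖ R`. -/
theorem statement8 {n : ℕ} (hn : 1 ≤ n) (f : (Fin n → ℤ) → EReal)
    (hbot : NoBot f) (hM : MConvexFn f) (hbdd : BddDom f)
    (R : Finset (Fin n)) (hR : R.Nonempty) (hRp : R ≠ Finset.univ)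
    (c : ℝ) (y : Fin n → ℤ) (hy : f y ≠ ⊤)
    (i : Fin n) (hiR : i ∈ R)
    (hi : ∀ j : Fin n, j ∉ R → (c : EReal) < slopeZ f y i j)
    (h k : Fin n) (hhR : h ∈ R) (hkR : k ∉ R)
    (hd : slopeZ f y h k = (c : EReal)) (hdphi : phiR f R y = (c : EReal)) :
    ∀ j : Fin n, j ∉ R → (c : EReal) < slopeZ f (y + chi h - chi k) i j := by
  intro j hjR
  have hyb : f y ≠ ⊥ := hbot y
  set a : ℝ := (f y).toReal with ha_def
  have ha : f y = (a : ℝ) := (EReal.coe_toReal hy hyb).symm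
  have hd' : f (y + chi h - chi k) - f y = (c : EReal) := hd
  have hy'b : f (y + chi h - chi k) ≠ ⊥ := hbot _
  have hy't : f (y + chi h - chi k) ≠ ⊤ := by
    intro e
    rw [e, ha, EReal.top_sub_coe] at hd'
    simp at hd'
  set b : ℝ := (f (y + chi h - chi k)).toReal with hb_def
  have hb : f (y + chi h - chi k) = (b : ℝ) := (EReal.coe_toReal hy't hy'b).symm
  have hbac : b = a + c := by
    rw [hb, ha, ← EReal.coe_sub, EReal.coe_eq_coe_iff] at hd'
    linarith
  by_contra hcon
  push_neg at hcon
  have hcon' : f (y + chi h - chi k + chi i - chi j) - f (y + chi h - chi k) ≤ (c : EReal) :=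
    hcon
  have hY2t : f (y + chi h - chi k + chi i - chi j) ≠ ⊤ := by
    intro e
    rw [e, hb, EReal.top_sub_coe] at hcon'
    simp at hcon'
  have hY2val : f (y + chi h - chi k + chi i - chi j) ≤ ((a + 2*c : ℝ) : EReal) := by
    have hY2b : f (y + chi h - chi k + chi i - chi j) ≠ ⊥ := hbot _
    set b2 : ℝ := (f (y + chi h - chi k + chi i - chi j)).toReal with hb2_def
    have hb2 : f (y + chi h - chi k + chi i - chi j) = (b2 : ℝ) :=
      (EReal.coe_toReal hY2t hY2b).symm
    rw [hb2, hb, ← EReal.coe_sub, EReal.coe_le_coe_iff] at hcon'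
    rw [hb2, EReal.coe_le_coe_iff]
    linarith
  have hik : i ≠ k := fun e => hkR (e ▸ hiR)
  have hij : i ≠ j := fun e => hjR (e ▸ hiR)
  have hyi : y i < (y + chi h - chi k + chi i - chi j) i := by
    simp only [Pi.add_apply, Pi.sub_apply, chi, if_neg hik, if_neg hij, if_pos rfl]
    split_ifs <;> omega
  obtain ⟨j', hj'lt, hexc⟩ := hM.2 (y + chi h - chi k + chi i - chi j) y hY2t hy i hyi
  have hsum : f (y + chi h - chi k + chi i - chi j - chi i + chi j') + f (y + chi i - chi j')
      ≤ ((2*a + 2*c : ℝ) : EReal) := by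
    refine le_trans hexc ?_
    rw [ha]
    calc f (y + chi h - chi k + chi i - chi j) + ((a : ℝ) : EReal)
        ≤ ((a + 2*c : ℝ) : EReal) + ((a : ℝ) : EReal) := add_le_add_left hY2val _
      _ = ((2*a + 2*c : ℝ) : EReal) := by rw [← EReal.coe_add, EReal.coe_eq_coe_iff]; ring
  have hj'cases : j' = k ∨ j' = j := by
    by_contra hc
    push_neg at hc
    simp only [Pi.add_apply, Pi.sub_apply, chi, if_neg hc.1, if_neg hc.2] at hj'lt
    split_ifs at hj'lt <;> omega
  rcases hj'cases with he | he <;> rw [he] at hsum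
  · -- j' = k
    have eU : y + chi h - chi k + chi i - chi j - chi i + chi k = y + chi h - chi j := by
      abel
    rw [eU] at hsum
    have h1 : (c : EReal) ≤ f (y + chi h - chi j) - (a : ℝ) := by
      have hphile : phiR f R y ≤ slopeZ f y h j := by
        calc phiR f R y ≤ ⨅ j'' ∈ Rᶜ, slopeZ f y h j'' := by
              unfold phiR; exact iInf₂_le h hhR
          _ ≤ slopeZ f y h j := iInf₂_le j (Finset.mem_compl.mpr hjR)
      rw [hdphi] at hphile
      have : slopeZ f y h j = f (y + chi h - chi j) - (a : ℝ) := by rw [slopeZ, ha]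
      rw [this] at hphile
      exact hphile
    have h2 : (c : EReal) < f (y + chi i - chi k) - (a : ℝ) := by
      have := hi k hkR
      rw [slopeZ, ha] at this
      exact this
    exact ereal_contra _ _ (hbot _) (hbot _) a c h1 h2 hsum
  · -- j' = j
    have eU : y + chi h - chi k + chi i - chi j - chi i + chi j = y + chi h - chi k := by
      abel
    rw [eU] at hsum
    have h1 : (c : EReal) ≤ f (y + chi h - chi k) - (a : ℝ) := by
      rw [hb, ← EReal.coe_sub, EReal.coe_le_coe_iff]
      linarith
    have h2 : (c : EReal) < f (y + chi i - chi j) - (a : ℝ) := by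
      have := hi j hjR
      rw [slopeZ, ha] at this
      exact this
    exact ereal_contra _ _ (hbot _) (hbot _) a c h1 h2 hsum
end
end

section
/- Let f : ℤ^n → ℝ ∪ {+∞} be a function satisfying the exchange axiom (M-EXC) with dom f ≠ ∅. Then x(N) = y(N) for every x, y ∈ dom f, i.e., dom f is contained in a hyperplane of the form {x : x(N) = r} for some integer r. -/
noncomputable section

open scoped BigOperators

lemma aux_ne_top {n : ℕ} (f : (Fin n → ℤ) → EReal) (hbot : NoBot f)
    {a b c d : Fin n → ℤ} (h : f a + f b ≤ f c + f d)
    (hc : f c ≠ ⊤) (hd : f d ≠ ⊤) : f a ≠ ⊤ := by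
  intro ha
  rw [ha, EReal.top_add_of_ne_bot (hbot b)] at h
  exact (EReal.add_lt_top hc hd).ne (top_le_iff.mp h)

lemma step {n : ℕ} (f : (Fin n → ℤ) → EReal) (hbot : NoBot f) (hM : MConvexFn f)
    (x y : Fin n → ℤ) (hx : f x ≠ ⊤) (hy : f y ≠ ⊤)
    (h : ∑ k, y k < ∑ k, x k) :
    ∃ x' : Fin n → ℤ, f x' ≠ ⊤ ∧ (∑ k, x' k = ∑ k, x k) ∧
      (∑ k, (x' k - y k).natAbs) + 2 = ∑ k, (x k - y k).natAbs := by
  have hexi : ∃ i, y i < x i := by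
    by_contra h'
    push_neg at h'
    exact absurd (Finset.sum_le_sum (fun i _ => h' i)) (not_le.mpr h)
  obtain ⟨i, hi⟩ := hexi
  obtain ⟨j, hj, hle⟩ := hM.2 x y hx hy i hi
  have hij : i ≠ j := by rintro rfl; omega
  refine ⟨x - chi i + chi j, aux_ne_top f hbot hle hx hy, ?_, ?_⟩
  · simp [chi, Finset.sum_add_distrib, Finset.sum_sub_distrib]
  · have hz : ∀ k, (((x - chi i + chi j) k - y k).natAbs : ℤ)
        = ((x k - y k).natAbs : ℤ) - (chi i k + chi j k) := by
      intro k
      simp only [Pi.add_apply, Pi.sub_apply, chi]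
      rcases eq_or_ne k i with rfl | hki
      · simp only [if_pos rfl, if_neg hij]
        omega
      · rcases eq_or_ne k j with rfl | hkj
        · simp only [if_neg hki, if_pos rfl]
          omega
        · simp only [if_neg hki, if_neg hkj]
          omega
    have hsum : (∑ k, (((x - chi i + chi j) k - y k).natAbs : ℤ))
        = (∑ k, ((x k - y k).natAbs : ℤ)) - 2 := by
      rw [Finset.sum_congr rfl (fun k _ => hz k), Finset.sum_sub_distrib]
      simp [chi, Finset.sum_add_distrib]
    rw [← Nat.cast_sum, ← Nat.cast_sum] at hsum
    omega

/-- Under (M-EXC), all points of `dom f` have the same coordinate sum: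
`x(N) = y(N)` for all `x, y ∈ dom f`. -/
theorem statement10 {n : ℕ} (hn : 1 ≤ n) (f : (Fin n → ℤ) → EReal)
    (hbot : NoBot f) (hM : MConvexFn f)
    (x y : Fin n → ℤ) (hx : f x ≠ ⊤) (hy : f y ≠ ⊤) :
    ∑ i, x i = ∑ i, y i := by
  suffices H : ∀ d : ℕ, ∀ a b : Fin n → ℤ, f a ≠ ⊤ → f b ≠ ⊤ →
      ∑ k, (a k - b k).natAbs = d → ∑ k, a k = ∑ k, b k from H _ x y hx hy rfl
  intro d
  induction d using Nat.strong_induction_on with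
  | _ d ih =>
    intro a b ha hb hd
    rcases lt_trichotomy (∑ k, a k) (∑ k, b k) with h | h | h
    · obtain ⟨b', hb', hsum, hdist⟩ := step f hbot hM b a hb ha h
      have hcomm : ∀ k, (b k - a k).natAbs = (a k - b k).natAbs := fun k => by omega
      rw [Finset.sum_congr rfl (fun k _ => hcomm k), hd] at hdist
      have := ih _ (by omega) b' a hb' ha rfl
      omega
    · exact h
    · obtain ⟨a', ha', hsum, hdist⟩ := step f hbot hM a b ha hb h
      rw [hd] at hdist
      have := ih _ (by omega) a' b ha' hb rfl
      omega
end
end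

section
/- Let f : ℝ^n → ℝ ∪ {+∞} be a polyhedral M-convex function with bounded nonempty effective domain. A vector x* ∈ dom f is a minimizer of f if and only if f'_ℝ(x*; i, j) ≥ 0 for all i, j ∈ N. -/
noncomputable section

open scoped BigOperators

/-- The `i`-th unit vector in `ℝ^n`. -/
def chiR {n : ℕ} (i : Fin n) : Fin n → ℝ := fun k => if k = i then 1 else 0

/-- The function never takes the value `-∞`, i.e. its codomain is `ℝ ∪ {+∞}`. -/
def NoBotR {n : ℕ} (f : (Fin n → ℝ) → EReal) : Prop := ∀ x, f x ≠ ⊥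

/-- `f` is polyhedral convex: its epigraph is a nonempty intersection of finitely many
closed affine halfspaces. -/
def PolyhedralConvex {n : ℕ} (f : (Fin n → ℝ) → EReal) : Prop :=
  (∃ (x : Fin n → ℝ) (t : ℝ), f x ≤ (t : EReal)) ∧
  ∃ (m : ℕ) (a : Fin m → Fin n → ℝ) (b c : Fin m → ℝ),
    ∀ (x : Fin n → ℝ) (t : ℝ),
      f x ≤ (t : EReal) ↔ ∀ k : Fin m, (∑ i, a k i * x i) + b k * t ≤ c k

/-- The exchange axiom (M-EXC[ℝ]). -/
def MExcR {n : ℕ} (f : (Fin n → ℝ) → EReal) : Prop :=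
  ∀ x y : Fin n → ℝ, f x ≠ ⊤ → f y ≠ ⊤ →
    ∀ i : Fin n, y i < x i →
      ∃ j : Fin n, x j < y j ∧ ∃ ε₀ : ℝ, 0 < ε₀ ∧
        ∀ ε : ℝ, 0 ≤ ε → ε ≤ ε₀ →
          f (x - ε • (chiR i - chiR j)) + f (y + ε • (chiR i - chiR j)) ≤ f x + f y

/-- Polyhedral M-convex function. -/
def PolyMConvex {n : ℕ} (f : (Fin n → ℝ) → EReal) : Prop :=
  PolyhedralConvex f ∧ MExcR f

/-- The directional derivative `f'_ℝ(x; i, j) = lim_{α ↓ 0} (f(x + α(χ_i - χ_j)) - f(x))/α`.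
For a (polyhedral) convex function the difference quotient is nondecreasing in `α`, so the
limit equals the infimum of the difference quotients over `α > 0`. -/
def slopeR {n : ℕ} (f : (Fin n → ℝ) → EReal) (x : Fin n → ℝ) (i j : Fin n) : EReal :=
  ⨅ α : {a : ℝ // 0 < a}, (f (x + α.1 • (chiR i - chiR j)) - f x) * (((α.1)⁻¹ : ℝ) : EReal)

/-- `φ_ℝ(x) = min_{i, j ∈ N} f'_ℝ(x; i, j)`. -/
def phiRp {n : ℕ} (f : (Fin n → ℝ) → EReal) (x : Fin n → ℝ) : EReal :=
  ⨅ i : Fin n, ⨅ j : Fin n, slopeR f x i j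

/-- Bounded effective domain. -/
def BddDomR {n : ℕ} (f : (Fin n → ℝ) → EReal) : Prop :=
  ∃ C : ℝ, ∀ x : Fin n → ℝ, f x ≠ ⊤ → ∀ i, |x i| ≤ C

lemma ereal_real (a : EReal) (h1 : a ≠ ⊤) (h2 : a ≠ ⊥) : ∃ r : ℝ, a = r := by
  induction a with
  | bot => exact absurd rfl h2
  | coe r => exact ⟨r, rfl⟩
  | top => exact absurd rfl h1

lemma sum_le_real {A B : EReal} (hA : A ≠ ⊥) (hB : B ≠ ⊥) {c : ℝ}
    (h : A + B ≤ (c : EReal)) : ∃ a b : ℝ, A = a ∧ B = b ∧ a + b ≤ c := by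
  have hAt : A ≠ ⊤ := by
    rintro rfl
    rw [EReal.top_add_of_ne_bot hB] at h
    exact absurd h (by simp)
  have hBt : B ≠ ⊤ := by
    rintro rfl
    rw [EReal.add_top_of_ne_bot hA] at h
    exact absurd h (by simp)
  obtain ⟨a, rfl⟩ := ereal_real A hAt hA
  obtain ⟨b, rfl⟩ := ereal_real B hBt hB
  exact ⟨a, b, rfl, rfl, by exact_mod_cast h⟩

lemma sum_abs_lt {n : ℕ} (x y₀ : Fin n → ℝ) (i j : Fin n) (ε : ℝ) (hε : 0 < ε)
    (h1 : ε ≤ x i - y₀ i) (h2 : ε ≤ y₀ j - x j) :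
    ∑ k, |x k - (y₀ + ε • (chiR i - chiR j)) k| < ∑ k, |x k - y₀ k| := by
  have hij : i ≠ j := by
    rintro rfl; linarith
  apply Finset.sum_lt_sum
  · intro k _
    simp only [Pi.add_apply, Pi.smul_apply, Pi.sub_apply, chiR, smul_eq_mul]
    rcases eq_or_ne k i with rfl | hki
    · rw [if_pos rfl, if_neg hij]
      have e1 : x k - (y₀ k + ε * (1 - 0)) = (x k - y₀ k) - ε := by ring
      rw [e1, abs_of_nonneg (by linarith), abs_of_nonneg (by linarith)]
      linarith
    · rcases eq_or_ne k j with rfl | hkj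
      · rw [if_neg hki, if_pos rfl]
        have e1 : x k - (y₀ k + ε * (0 - 1)) = (x k - y₀ k) + ε := by ring
        rw [e1, abs_of_nonpos (by linarith), abs_of_nonpos (by linarith)]
        linarith
      · rw [if_neg hki, if_neg hkj]
        simp
  · refine ⟨i, Finset.mem_univ i, ?_⟩
    simp only [Pi.add_apply, Pi.smul_apply, Pi.sub_apply, chiR, smul_eq_mul,
      if_pos rfl, if_neg hij, if_true]
    have e1 : x i - (y₀ i + ε * (1 - 0)) = (x i - y₀ i) - ε := by ring
    rw [e1, abs_of_nonneg (by linarith), abs_of_nonneg (by linarith)]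
    linarith

lemma slope_step {n : ℕ} (f : (Fin n → ℝ) → EReal) (hbot : NoBotR f) (x : Fin n → ℝ)
    (hx : f x ≠ ⊤) (i j : Fin n) (h : 0 ≤ slopeR f x i j) (ε : ℝ) (hε : 0 < ε) :
    f x ≤ f (x + ε • (chiR i - chiR j)) := by
  obtain ⟨r, hr⟩ := ereal_real (f x) hx (hbot x)
  set z := x + ε • (chiR i - chiR j) with hz
  have hle : (0 : EReal) ≤ (f z - f x) * ((ε⁻¹ : ℝ) : EReal) :=
    le_trans h (iInf_le _ (⟨ε, hε⟩ : {a : ℝ // 0 < a}))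
  rcases eq_or_ne (f z) ⊤ with ht | ht
  · rw [ht]; exact le_top
  obtain ⟨s, hs⟩ := ereal_real (f z) ht (hbot z)
  rw [hr, hs] at hle ⊢
  rw [← EReal.coe_sub, ← EReal.coe_mul] at hle
  have : (0:ℝ) ≤ (s - r) * ε⁻¹ := by exact_mod_cast hle
  have hinv : (0:ℝ) < ε⁻¹ := inv_pos.mpr hε
  exact_mod_cast (by nlinarith : r ≤ s)

lemma slope_nonneg_of_min {n : ℕ} (f : (Fin n → ℝ) → EReal) (hbot : NoBotR f)
    (x : Fin n → ℝ) (hx : f x ≠ ⊤) (hmin : ∀ y, f x ≤ f y) (i j : Fin n) :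
    0 ≤ slopeR f x i j := by
  obtain ⟨r, hr⟩ := ereal_real (f x) hx (hbot x)
  apply le_iInf
  rintro ⟨α, hα⟩
  set z := x + α • (chiR i - chiR j) with hz
  have hinv : (0:ℝ) < α⁻¹ := inv_pos.mpr hα
  rcases eq_or_ne (f z) ⊤ with ht | ht
  · rw [ht, hr, EReal.top_sub_coe, EReal.top_mul_of_pos (by exact_mod_cast hinv)]
    exact le_top
  obtain ⟨s, hs⟩ := ereal_real (f z) ht (hbot z)
  have hrs : r ≤ s := by
    have := hmin z; rw [hr, hs] at this; exact_mod_cast this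
  rw [hr, hs, ← EReal.coe_sub, ← EReal.coe_mul]
  exact_mod_cast mul_nonneg (by linarith) hinv.le

/-- A point `x* ∈ dom f` of a polyhedral M-convex function with bounded nonempty effective
domain is a global minimizer iff `f'_ℝ(x*; i, j) ≥ 0` for all `i, j ∈ N`. -/
theorem statement13 {n : ℕ} (hn : 1 ≤ n) (f : (Fin n → ℝ) → EReal)
    (hbot : NoBotR f) (hM : PolyMConvex f) (hbdd : BddDomR f)
    (x : Fin n → ℝ) (hx : f x ≠ ⊤) :
    (∀ y : Fin n → ℝ, f x ≤ f y) ↔ ∀ i j : Fin n, 0 ≤ slopeR f x i j := by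
  constructor
  · intro hmin i j
    exact slope_nonneg_of_min f hbot x hx hmin i j
  · intro hs y
    by_contra hlt
    push_neg at hlt
    obtain ⟨r, hr⟩ := ereal_real (f x) hx (hbot x)
    obtain ⟨s, hsv⟩ := ereal_real (f y) (ne_top_of_lt hlt) (hbot y)
    have hsr : s < r := by
      rw [hr, hsv] at hlt; exact_mod_cast hlt
    obtain ⟨C, hC⟩ := hbdd
    obtain ⟨m, a, b, c, hiff⟩ := hM.1.2
    set S : Set (Fin n → ℝ) := {z | f z ≤ (s : EReal)} with hSdef
    have hSclosed : IsClosed S := by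
      have hSeq : S = ⋂ k : Fin m, {z : Fin n → ℝ | (∑ i, a k i * z i) + b k * s ≤ c k} := by
        ext z
        simp only [Set.mem_iInter, Set.mem_setOf_eq, hSdef]
        exact hiff z s
      rw [hSeq]
      refine isClosed_iInter fun k => isClosed_le ?_ continuous_const
      exact Continuous.add
        (continuous_finset_sum _ fun i _ => continuous_const.mul (continuous_apply i))
        continuous_const
    have hSsub : S ⊆ Set.pi Set.univ (fun _ => Set.Icc (-C) C) := by
      intro z hz i' _
      have hzt : f z ≠ ⊤ := ne_top_of_le_ne_top (EReal.coe_ne_top s) hz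
      exact abs_le.mp (hC z hzt i')
    have hScompact : IsCompact S :=
      (isCompact_univ_pi fun _ => isCompact_Icc).of_isClosed_subset hSclosed hSsub
    have hyS : y ∈ S := by rw [hSdef, Set.mem_setOf_eq, hsv]
    have hgcont : Continuous (fun z : Fin n → ℝ => ∑ k, |x k - z k|) :=
      continuous_finset_sum _ fun k _ => (continuous_const.sub (continuous_apply k)).abs
    obtain ⟨y₀, hy₀S, hy₀min⟩ :=
      hScompact.exists_isMinOn ⟨y, hyS⟩ hgcont.continuousOn
    have hy₀mem : f y₀ ≤ (s : EReal) := hy₀S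
    have hy₀top : f y₀ ≠ ⊤ := ne_top_of_le_ne_top (EReal.coe_ne_top s) hy₀mem
    obtain ⟨s₀, hs₀⟩ := ereal_real (f y₀) hy₀top (hbot y₀)
    have hs₀s : s₀ ≤ s := by
      rw [hs₀] at hy₀mem; exact_mod_cast hy₀mem
    have hne : ∃ i, y₀ i ≠ x i := by
      by_contra h
      push_neg at h
      have hyx : y₀ = x := funext h
      rw [hyx, hr] at hs₀
      have : r = s₀ := by exact_mod_cast hs₀
      linarith
    obtain ⟨i, hi⟩ := hne
    rcases lt_or_gt_of_ne hi with hilt | higt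
    · -- y₀ i < x i : exchange from x
      obtain ⟨j, hxj, ε₀, hε₀, hexc⟩ := hM.2 x y₀ hx hy₀top i hilt
      set ε := min ε₀ (min (x i - y₀ i) (y₀ j - x j)) with hεdef
      have hεpos : 0 < ε := lt_min hε₀ (lt_min (by linarith) (by linarith))
      have hε1 : ε ≤ x i - y₀ i := le_trans (min_le_right _ _) (min_le_left _ _)
      have hε2 : ε ≤ y₀ j - x j := le_trans (min_le_right _ _) (min_le_right _ _)
      have hexc' := hexc ε hεpos.le (min_le_left _ _)
      have hxrw : x - ε • (chiR i - chiR j) = x + ε • (chiR j - chiR i) := by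
        funext k; simp [chiR]; ring
      rw [hxrw, hr, hs₀, ← EReal.coe_add] at hexc'
      obtain ⟨a', b', hA', hB', hab⟩ := sum_le_real (hbot _) (hbot _) hexc'
      have hA : f x ≤ f (x + ε • (chiR j - chiR i)) :=
        slope_step f hbot x hx j i (hs j i) ε hεpos
      have hra : r ≤ a' := by rw [hr, hA'] at hA; exact_mod_cast hA
      have hbs : b' ≤ s := by linarith
      have hzS : y₀ + ε • (chiR i - chiR j) ∈ S := by
        rw [hSdef, Set.mem_setOf_eq, hB']; exact_mod_cast hbs
      have hmin2 := isMinOn_iff.mp hy₀min _ hzS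
      have hlt2 := sum_abs_lt x y₀ i j ε hεpos hε1 hε2
      linarith
    · -- x i < y₀ i : exchange from y₀
      obtain ⟨j, hxj, ε₀, hε₀, hexc⟩ := hM.2 y₀ x hy₀top hx i higt
      set ε := min ε₀ (min (y₀ i - x i) (x j - y₀ j)) with hεdef
      have hεpos : 0 < ε := lt_min hε₀ (lt_min (by linarith) (by linarith))
      have hε1 : ε ≤ y₀ i - x i := le_trans (min_le_right _ _) (min_le_left _ _)
      have hε2 : ε ≤ x j - y₀ j := le_trans (min_le_right _ _) (min_le_right _ _)
      have hexc' := hexc ε hεpos.le (min_le_left _ _)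
      have hyrw : y₀ - ε • (chiR i - chiR j) = y₀ + ε • (chiR j - chiR i) := by
        funext k; simp [chiR]; ring
      rw [hyrw, hs₀, hr, ← EReal.coe_add] at hexc'
      obtain ⟨a', b', hA', hB', hab⟩ := sum_le_real (hbot _) (hbot _) hexc'
      have hB : f x ≤ f (x + ε • (chiR i - chiR j)) :=
        slope_step f hbot x hx i j (hs i j) ε hεpos
      have hrb : r ≤ b' := by rw [hr, hB'] at hB; exact_mod_cast hB
      have has : a' ≤ s := by linarith
      have hzS : y₀ + ε • (chiR j - chiR i) ∈ S := by
        rw [hSdef, Set.mem_setOf_eq, hA']; exact_mod_cast has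
      have hmin2 := isMinOn_iff.mp hy₀min _ hzS
      have hlt2 := sum_abs_lt x y₀ j i ε hεpos hε2 hε1
      linarith
end
end

section
/- Let f : ℝ^n → ℝ ∪ {+∞} be a polyhedral M-convex function with bounded nonempty effective domain. Then for all x, y ∈ dom f, it holds that f(y) − f(x) ≥ (1/2)‖y − x‖₁ · φ_ℝ(x). -/
noncomputable section

open scoped BigOperators

lemma ereal_sub_self' {a : EReal} (h1 : a ≠ ⊤) (h2 : a ≠ ⊥) : a - a = 0 := by
  lift a to ℝ using ⟨h1, h2⟩
  rw [← EReal.coe_sub, sub_self, EReal.coe_zero]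

lemma sum_abs_shift {n : ℕ} (i j : Fin n) (hij : i ≠ j) (u x : Fin n → ℝ) (ε : ℝ)
    (hε : 0 ≤ ε) (hi : x i + ε ≤ u i) (hj : u j + ε ≤ x j) :
    ∑ k, |(u - ε • (chiR i - chiR j)) k - x k| = (∑ k, |u k - x k|) - 2 * ε := by
  have key : ∀ k, |(u - ε • (chiR i - chiR j)) k - x k|
      = |u k - x k| + ((if k = i then -ε else 0) + (if k = j then -ε else 0)) := by
    intro k
    by_cases hki : k = i
    · subst hki
      have hkj : ¬ (k = j) := hij
      simp only [Pi.sub_apply, Pi.smul_apply, chiR, if_pos rfl, if_neg hkj, smul_eq_mul, if_true]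
      rw [abs_of_nonneg (by linarith), abs_of_nonneg (by linarith)]
      ring
    · by_cases hkj : k = j
      · subst hkj
        simp only [Pi.sub_apply, Pi.smul_apply, chiR, if_neg hki, if_pos rfl, smul_eq_mul, if_true]
        rw [abs_of_nonpos (by linarith), abs_of_nonpos (by linarith)]
        ring
      · simp only [Pi.sub_apply, Pi.smul_apply, chiR, if_neg hki, if_neg hkj, smul_eq_mul]
        ring_nf
  rw [Finset.sum_congr rfl (fun k _ => key k), Finset.sum_add_distrib, Finset.sum_add_distrib,
    Finset.sum_ite_eq' Finset.univ i (fun _ => -ε), Finset.sum_ite_eq' Finset.univ j (fun _ => -ε)]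
  simp
  ring

lemma flip_dir {n : ℕ} (i j : Fin n) (u : Fin n → ℝ) (ε : ℝ) :
    u + ε • (chiR i - chiR j) = u - ε • (chiR j - chiR i) := by
  rw [← neg_sub (chiR i) (chiR j), smul_neg, sub_neg_eq_add]

/-- Lower bound by the steepest descent slope: for all `x, y ∈ dom f`,
`f(y) - f(x) ≥ (1/2) ‖y - x‖₁ · φ_ℝ(x)`. -/
theorem statement14 {n : ℕ} (hn : 1 ≤ n) (f : (Fin n → ℝ) → EReal)
    (hbot : NoBotR f) (hM : PolyMConvex f) (hbdd : BddDomR f)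
    (x y : Fin n → ℝ) (hx : f x ≠ ⊤) (hy : f y ≠ ⊤) :
    (((∑ i, |y i - x i|) / 2 : ℝ) : EReal) * phiRp f x ≤ f y - f x := by
  classical
  have i0 : Fin n := ⟨0, hn⟩
  haveI : Nonempty {a : ℝ // 0 < a} := ⟨⟨1, one_pos⟩⟩
  -- φ ≤ 0
  have hslope0 : slopeR f x i0 i0 = 0 := by
    have hcongr : ∀ α : {a : ℝ // 0 < a},
        (f (x + α.1 • (chiR i0 - chiR i0)) - f x) * (((α.1)⁻¹ : ℝ) : EReal) = 0 := by
      intro α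
      rw [sub_self, smul_zero, add_zero, ereal_sub_self' hx (hbot x), zero_mul]
    rw [slopeR, iInf_congr hcongr]
    exact iInf_const
  have hφ0 : phiRp f x ≤ 0 := by
    calc phiRp f x ≤ ⨅ j, slopeR f x i0 j := iInf_le _ i0
    _ ≤ slopeR f x i0 i0 := iInf_le _ i0
    _ = 0 := hslope0
  by_cases hφbot : phiRp f x = ⊥
  · by_cases hyx : (∑ i, |y i - x i|) = 0
    · have hxy : y = x := by
        funext i
        have h1 : ∀ i ∈ Finset.univ, (0:ℝ) ≤ |y i - x i| := fun i _ => abs_nonneg _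
        have h2 := (Finset.sum_eq_zero_iff_of_nonneg h1).mp hyx i (Finset.mem_univ i)
        have h3 := abs_eq_zero.mp h2
        linarith
      subst hxy
      simp only [sub_self, abs_zero, Finset.sum_const_zero, zero_div, EReal.coe_zero, zero_mul]
      rw [ereal_sub_self' hx (hbot y)]
    · have hpos : 0 < (∑ i, |y i - x i|) / 2 := by
        have : 0 ≤ ∑ i, |y i - x i| := Finset.sum_nonneg fun i _ => abs_nonneg _
        have : 0 < ∑ i, |y i - x i| := lt_of_le_of_ne this (Ne.symm hyx)
        linarith
      rw [hφbot, EReal.coe_mul_bot_of_pos hpos]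
      exact bot_le
  -- main case : φ is a real number p ≤ 0
  set p := (phiRp f x).toReal with hp
  have hφtop : phiRp f x ≠ ⊤ := by
    intro h
    rw [h] at hφ0
    exact absurd hφ0 (by simp)
  have hφcoe : phiRp f x = (p : EReal) := (EReal.coe_toReal hφtop hφbot).symm
  -- slope lower bound property
  have hslope : ∀ (i j : Fin n) (ε : ℝ), 0 < ε → f (x + ε • (chiR i - chiR j)) ≠ ⊤ →
      (f x).toReal + ε * p ≤ (f (x + ε • (chiR i - chiR j))).toReal := by
    intro i j ε hε htop
    have h1 : phiRp f x ≤ (f (x + ε • (chiR i - chiR j)) - f x) * (((ε)⁻¹ : ℝ) : EReal) := by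
      refine le_trans (iInf_le _ i) (le_trans (iInf_le _ j) ?_)
      exact iInf_le _ (⟨ε, hε⟩ : {a : ℝ // 0 < a})
    have hA : f (x + ε • (chiR i - chiR j)) = (((f (x + ε • (chiR i - chiR j))).toReal : ℝ) : EReal) :=
      (EReal.coe_toReal htop (hbot _)).symm
    have hB : f x = (((f x).toReal : ℝ) : EReal) := (EReal.coe_toReal hx (hbot x)).symm
    rw [hφcoe, hA, hB, ← EReal.coe_sub, ← EReal.coe_mul, EReal.coe_le_coe_iff] at h1
    have h2 := mul_le_mul_of_nonneg_right h1 hε.le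
    rw [mul_assoc, inv_mul_cancel₀ hε.ne', mul_one] at h2
    linarith
  -- unpack polyhedral structure
  obtain ⟨⟨⟨x₀, t₀, hx₀⟩, m, a, b, c, H⟩, hEXC⟩ := hM
  set s : Fin m → (Fin n → ℝ) → ℝ := fun k z => ∑ i, a k i * z i with hsdef
  have H' : ∀ (z : Fin n → ℝ) (t : ℝ), f z ≤ (t : EReal) ↔ ∀ k, s k z + b k * t ≤ c k := H
  -- all coefficients b k are ≤ 0
  have hble : ∀ k, b k ≤ 0 := by
    intro k
    by_contra hbk
    push_neg at hbk
    set T := max t₀ ((c k - s k x₀) / b k + 1) with hT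
    have h1 : f x₀ ≤ (T : EReal) :=
      le_trans hx₀ (by exact_mod_cast le_max_left t₀ ((c k - s k x₀) / b k + 1))
    have h2 := (H' x₀ T).mp h1 k
    have h3 : (c k - s k x₀) / b k + 1 ≤ T := le_max_right _ _
    have h4 : b k * ((c k - s k x₀) / b k + 1) ≤ b k * T := mul_le_mul_of_nonneg_left h3 hbk.le
    have h5 : b k * ((c k - s k x₀) / b k + 1) = c k - s k x₀ + b k := by
      field_simp
    linarith
  have hx₀top : f x₀ ≠ ⊤ := by
    intro h
    rw [h] at hx₀
    exact absurd hx₀ (by simp)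
  -- some b k < 0
  have hnegex : ∃ k, b k < 0 := by
    set r := (f x₀).toReal with hrdef
    have hr : f x₀ = (r : EReal) := (EReal.coe_toReal hx₀top (hbot x₀)).symm
    have h1 := (H' x₀ r).mp (le_of_eq hr)
    have h2 : ¬ f x₀ ≤ ((r - 1 : ℝ) : EReal) := by
      rw [hr, EReal.coe_le_coe_iff]
      linarith
    rw [H' x₀ (r - 1)] at h2
    push_neg at h2
    obtain ⟨k, hk⟩ := h2
    refine ⟨k, ?_⟩
    have h3 := h1 k
    have h4 : b k * (r - 1) = b k * r - b k := by ring
    linarith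
  set neg : Finset (Fin m) := Finset.univ.filter (fun k => b k < 0) with hnegdef
  have hne : neg.Nonempty := by
    obtain ⟨k, hk⟩ := hnegex
    exact ⟨k, by simp [hnegdef, hk]⟩
  set F : (Fin n → ℝ) → ℝ := fun z => neg.sup' hne (fun k => (c k - s k z) / b k) with hFdef
  -- domain constraints
  have hdomc : ∀ z, f z ≠ ⊤ → ∀ k, b k = 0 → s k z ≤ c k := by
    intro z hz k hk
    have hr : f z = (((f z).toReal : ℝ) : EReal) := (EReal.coe_toReal hz (hbot z)).symm
    have h1 := (H' z (f z).toReal).mp (le_of_eq hr) k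
    rw [hk] at h1
    linarith
  -- key: constraints imply f z ≤ F z
  have hkey : ∀ z, (∀ k, b k = 0 → s k z ≤ c k) → f z ≤ ((F z : ℝ) : EReal) := by
    intro z hz
    rw [H' z (F z)]
    intro k
    rcases lt_or_eq_of_le (hble k) with hbk | hbk
    · have hk : k ∈ neg := by simp [hnegdef, hbk]
      have h3 : (c k - s k z) / b k ≤ F z := Finset.le_sup' (fun k => (c k - s k z) / b k) hk
      have h4 := (div_le_iff_of_neg hbk).mp h3
      have h5 : F z * b k = b k * F z := mul_comm _ _
      linarith
    · rw [hbk, zero_mul, add_zero]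
      exact hz k hbk
  have hdommem : ∀ z, (∀ k, b k = 0 → s k z ≤ c k) → f z ≠ ⊤ := by
    intro z hz h
    have := hkey z hz
    rw [h] at this
    exact absurd this (by simp)
  -- f = F on the domain
  have hFval : ∀ z, f z ≠ ⊤ → f z = ((F z : ℝ) : EReal) := by
    intro z hz
    set r := (f z).toReal with hrdef
    have hr : f z = (r : EReal) := (EReal.coe_toReal hz (hbot z)).symm
    have h1 := (H' z r).mp (le_of_eq hr)
    have hFr : F z ≤ r := by
      apply Finset.sup'_le
      intro k hk
      have hbk : b k < 0 := by
        simp only [hnegdef, Finset.mem_filter] at hk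
        exact hk.2
      have h2 := h1 k
      rw [div_le_iff_of_neg hbk]
      have h5 : r * b k = b k * r := mul_comm _ _
      linarith
    have hfF : f z ≤ ((F z : ℝ) : EReal) := hkey z (hdomc z hz)
    refine le_antisymm hfF ?_
    rw [hr]
    exact_mod_cast hFr
  -- domain is compact
  set D := {z : Fin n → ℝ | f z ≠ ⊤} with hD
  have hDeq : D = ⋂ k, {z : Fin n → ℝ | b k = 0 → s k z ≤ c k} := by
    ext z
    simp only [Set.mem_iInter, Set.mem_setOf_eq, hD]
    exact ⟨fun h k => hdomc z h k, fun h => hdommem z h⟩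
  have hscont : ∀ k, Continuous (s k) := by
    intro k
    exact continuous_finset_sum _ fun i _ => (continuous_const.mul (continuous_apply i))
  have hDclosed : IsClosed D := by
    rw [hDeq]
    refine isClosed_iInter fun k => ?_
    by_cases hbk : b k = 0
    · have he : {z : Fin n → ℝ | b k = 0 → s k z ≤ c k} = {z | s k z ≤ c k} := by
        ext z; simp [hbk]
      rw [he]
      exact isClosed_le (hscont k) continuous_const
    · have he : {z : Fin n → ℝ | b k = 0 → s k z ≤ c k} = Set.univ := by
        ext z; simp [hbk]
      rw [he]
      exact isClosed_univ
  obtain ⟨C, hC⟩ := hbdd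
  have hC0 : 0 ≤ C := le_trans (abs_nonneg (x i0)) (hC x hx i0)
  have hDsub : D ⊆ Metric.closedBall 0 C := by
    intro z hz
    rw [Metric.mem_closedBall, dist_pi_le_iff hC0]
    intro i
    simpa [Real.dist_eq] using hC z hz i
  have hDcpt : IsCompact D := (isCompact_closedBall (0 : Fin n → ℝ) C).of_isClosed_subset hDclosed hDsub
  -- continuity of F, N, G
  have hFcont : Continuous F := by
    apply Continuous.finset_sup'_apply hne
    intro k _
    exact (continuous_const.sub (hscont k)).div_const _
  set N : (Fin n → ℝ) → ℝ := fun z => ∑ i, |z i - x i| with hNdef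
  have hNcont : Continuous N :=
    continuous_finset_sum _ fun i _ => ((continuous_apply i).sub continuous_const).abs
  set G : (Fin n → ℝ) → ℝ := fun z => F z - N z / 2 * p with hGdef
  have hGcont : Continuous G := hFcont.sub ((hNcont.div_const 2).mul continuous_const)
  have hxD : x ∈ D := hx
  obtain ⟨y₁, hy₁D, hy₁m⟩ := hDcpt.exists_isMinOn ⟨x, hxD⟩ hGcont.continuousOn
  set D' := D ∩ {z | G z ≤ G y₁} with hD'
  have hD'cpt : IsCompact D' := hDcpt.inter_right (isClosed_le hGcont continuous_const)
  have hD'ne : D'.Nonempty := ⟨y₁, hy₁D, by simp⟩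
  obtain ⟨w, hwD', hwm⟩ := hD'cpt.exists_isMinOn hD'ne hNcont.continuousOn
  have hwD : f w ≠ ⊤ := hwD'.1
  have hfw : f w = ((F w : ℝ) : EReal) := hFval w hwD
  have hfx : f x = ((F x : ℝ) : EReal) := hFval x hx
  have hfxR : (f x).toReal = F x := by rw [hfx, EReal.toReal_coe]
  -- the minimizer of N on D' is x itself
  have hwx : w = x := by
    by_contra hwx
    have hex : ∃ i, w i ≠ x i := by
      by_contra h
      push_neg at h
      exact hwx (funext h)
    obtain ⟨i, hi⟩ := hex
    rcases lt_or_gt_of_ne hi with hlt | hgt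
    · -- case w i < x i : exchange from x towards w
      obtain ⟨j, hj, ε₀, hε₀, hexc⟩ := hEXC x w hx hwD i hlt
      have hij : j ≠ i := by
        intro h
        rw [h] at hj
        linarith
      set ε := min ε₀ (min (x i - w i) (w j - x j)) with hε
      have hεi : ε ≤ x i - w i := le_trans (min_le_right _ _) (min_le_left _ _)
      have hεj : ε ≤ w j - x j := le_trans (min_le_right _ _) (min_le_right _ _)
      have hεpos : 0 < ε := lt_min hε₀ (lt_min (by linarith) (by linarith))
      have h1 := hexc ε hεpos.le (min_le_left _ _)
      rw [flip_dir i j w ε] at h1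
      -- h1 : f (x - ε • (chiR i - chiR j)) + f (w - ε • (chiR j - chiR i)) ≤ f x + f w
      have hxdir : x - ε • (chiR i - chiR j) = x + ε • (chiR j - chiR i) :=
        (flip_dir j i x ε).symm
      rw [hxdir] at h1
      set x' := x + ε • (chiR j - chiR i) with hx'
      set w' := w - ε • (chiR j - chiR i) with hw'
      have hx'top : f x' ≠ ⊤ := by
        intro h
        rw [h, EReal.top_add_of_ne_bot (hbot w'), hfw, hfx, ← EReal.coe_add] at h1
        exact EReal.coe_ne_top _ (top_le_iff.mp h1)
      have hw'top : f w' ≠ ⊤ := by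
        intro h
        rw [h, EReal.add_top_of_ne_bot (hbot x'), hfw, hfx, ← EReal.coe_add] at h1
        exact EReal.coe_ne_top _ (top_le_iff.mp h1)
      have hfx' : f x' = (((f x').toReal : ℝ) : EReal) := (EReal.coe_toReal hx'top (hbot x')).symm
      have hfw' : f w' = ((F w' : ℝ) : EReal) := hFval w' hw'top
      rw [hfw', hfx', hfw, hfx, ← EReal.coe_add, ← EReal.coe_add, EReal.coe_le_coe_iff] at h1
      have h2 : (f x).toReal + ε * p ≤ (f x').toReal := hslope j i ε hεpos hx'top
      have hNw' : N w' = N w - 2 * ε :=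
        sum_abs_shift j i hij w x ε hεpos.le (by linarith) (by linarith)
      have hGw' : G w' ≤ G w := by
        simp only [hGdef]
        rw [hNw']
        have hp0 : p ≤ 0 := by
          rw [hφcoe] at hφ0
          exact_mod_cast hφ0
        nlinarith [h1, h2, hfxR]
      have hw'D' : w' ∈ D' := ⟨hw'top, le_trans hGw' hwD'.2⟩
      have h3 := isMinOn_iff.mp hwm w' hw'D'
      rw [hNw'] at h3
      linarith
    · -- case x i < w i : exchange from w towards x
      obtain ⟨j, hj, ε₀, hε₀, hexc⟩ := hEXC w x hwD hx i hgt
      have hij : i ≠ j := by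
        intro h
        rw [h] at hgt
        linarith
      set ε := min ε₀ (min (w i - x i) (x j - w j)) with hε
      have hεi : ε ≤ w i - x i := le_trans (min_le_right _ _) (min_le_left _ _)
      have hεj : ε ≤ x j - w j := le_trans (min_le_right _ _) (min_le_right _ _)
      have hεpos : 0 < ε := lt_min hε₀ (lt_min (by linarith) (by linarith))
      have h1 := hexc ε hεpos.le (min_le_left _ _)
      -- h1 : f (w - ε • (chiR i - chiR j)) + f (x + ε • (chiR i - chiR j)) ≤ f w + f x
      set x' := x + ε • (chiR i - chiR j) with hx'
      set w' := w - ε • (chiR i - chiR j) with hw'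
      have hx'top : f x' ≠ ⊤ := by
        intro h
        rw [h, EReal.add_top_of_ne_bot (hbot w'), hfw, hfx, ← EReal.coe_add] at h1
        exact EReal.coe_ne_top _ (top_le_iff.mp h1)
      have hw'top : f w' ≠ ⊤ := by
        intro h
        rw [h, EReal.top_add_of_ne_bot (hbot x'), hfw, hfx, ← EReal.coe_add] at h1
        exact EReal.coe_ne_top _ (top_le_iff.mp h1)
      have hfx' : f x' = (((f x').toReal : ℝ) : EReal) := (EReal.coe_toReal hx'top (hbot x')).symm
      have hfw' : f w' = ((F w' : ℝ) : EReal) := hFval w' hw'top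
      rw [hfw', hfx', hfw, hfx, ← EReal.coe_add, ← EReal.coe_add, EReal.coe_le_coe_iff] at h1
      have h2 : (f x).toReal + ε * p ≤ (f x').toReal := hslope i j ε hεpos hx'top
      have hNw' : N w' = N w - 2 * ε :=
        sum_abs_shift i j hij w x ε hεpos.le (by linarith) (by linarith)
      have hGw' : G w' ≤ G w := by
        simp only [hGdef]
        rw [hNw']
        have hp0 : p ≤ 0 := by
          rw [hφcoe] at hφ0
          exact_mod_cast hφ0
        nlinarith [h1, h2, hfxR]
      have hw'D' : w' ∈ D' := ⟨hw'top, le_trans hGw' hwD'.2⟩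
      have h3 := isMinOn_iff.mp hwm w' hw'D'
      rw [hNw'] at h3
      linarith
  -- conclude
  have hNx : N x = 0 := by simp [hNdef]
  have hGx : G x = F x := by rw [hGdef]; simp only; rw [hNx]; ring
  have hGy₁ : G y₁ = F x := by
    refine le_antisymm (isMinOn_iff.mp hy₁m x hxD |>.trans_eq hGx) ?_
    have h5 : G w ≤ G y₁ := hwD'.2
    rw [hwx, hGx] at h5
    exact h5
  have hGyb := isMinOn_iff.mp hy₁m y hy
  rw [hGy₁] at hGyb
  -- hGyb : F x ≤ G y = F y - N y / 2 * p
  have hNy : N y = ∑ i, |y i - x i| := rfl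
  rw [hFval y hy, hfx, hφcoe, ← EReal.coe_sub, ← EReal.coe_mul, EReal.coe_le_coe_iff]
  have : G y = F y - N y / 2 * p := rfl
  rw [this, hNy] at hGyb
  linarith
end
end

section
/- Let f : ℝ^n → ℝ ∪ {+∞} be a polyhedral M-convex function with bounded nonempty effective domain. Let y ∈ dom f with φ_ℝ(y) < 0, let i, j ∈ N be distinct elements such that f'_ℝ(y; i, j) = φ_ℝ(y), and let λ > 0 be a real number such that f(y + λ(χ_i − χ_j)) − f(y) = λ φ_ℝ(y). Then the vector ŷ = y + λ(χ_i − χ_j) satisfies φ_ℝ(ŷ) ≥ φ_ℝ(y). -/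
noncomputable section

open scoped BigOperators

lemma quot_lower {n : ℕ} (f : (Fin n → ℝ) → EReal) (hbot : NoBotR f)
    (y : Fin n → ℝ) (c φr : ℝ) (hc : f y = (c : EReal))
    (hφ : (φr : EReal) ≤ phiRp f y) (s t : Fin n) (ε : ℝ) (hε : 0 < ε) :
    (↑(c + ε * φr) : EReal) ≤ f (y + ε • (chiR s - chiR t)) := by
  set w := y + ε • (chiR s - chiR t) with hw
  by_cases hT : f w = ⊤
  · rw [hT]; exact le_top
  have hwr : f w = ((f w).toReal : EReal) := (EReal.coe_toReal hT (hbot w)).symm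
  set u := (f w).toReal
  have h1 : (φr : EReal) ≤ (f w - f y) * ((ε⁻¹ : ℝ) : EReal) := by
    refine hφ.trans ?_
    refine (iInf₂_le s t).trans ?_
    exact iInf_le _ (⟨ε, hε⟩ : {a : ℝ // 0 < a})
  rw [hwr, hc, ← EReal.coe_sub, ← EReal.coe_mul, EReal.coe_le_coe_iff] at h1
  rw [hwr, EReal.coe_le_coe_iff]
  have h2 : φr * ε ≤ u - c := by
    have := mul_le_mul_of_nonneg_right h1 hε.le
    rwa [mul_assoc, inv_mul_cancel₀ hε.ne', mul_one] at this
  linarith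

lemma star_lemma {n : ℕ} (f : (Fin n → ℝ) → EReal)
    (hbot : NoBotR f) (hM : PolyMConvex f) (hbdd : BddDomR f)
    (y : Fin n → ℝ) (c φr : ℝ) (hc : f y = (c : EReal))
    (hφ : (φr : EReal) ≤ phiRp f y) :
    ∀ z : Fin n → ℝ, f z ≠ ⊤ →
      (↑(c + φr * ∑ s, max (z s - y s) 0) : EReal) ≤ f z := by
  set D : (Fin n → ℝ) → ℝ := fun z => ∑ s, max (z s - y s) 0 with hD
  have hDcont : Continuous D := by
    apply continuous_finset_sum
    intro s _
    exact ((continuous_apply s).sub continuous_const).max continuous_const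
  have hy : f y ≠ ⊤ := by rw [hc]; exact EReal.coe_ne_top c
  by_contra hcon
  push_neg at hcon
  obtain ⟨z₀, hz₀top, hz₀⟩ := hcon
  have hz₀r : f z₀ = (((f z₀).toReal : ℝ) : EReal) := (EReal.coe_toReal hz₀top (hbot z₀)).symm
  set r₀ := (f z₀).toReal with hr₀
  set t₀ := r₀ - φr * D z₀ with ht₀
  have ht₀c : t₀ < c := by
    rw [hz₀r, EReal.coe_lt_coe_iff] at hz₀
    simp only [ht₀]; linarith
  set A : Set (Fin n → ℝ) := {z | f z ≤ ((t₀ + φr * D z : ℝ) : EReal)} with hA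
  have hz₀A : z₀ ∈ A := by
    show f z₀ ≤ _
    rw [hz₀r]
    exact EReal.coe_le_coe_iff.mpr (by simp only [ht₀]; linarith)
  obtain ⟨-, m, a, b, cc, hP⟩ := hM.1
  have hAclosed : IsClosed A := by
    have : A = ⋂ k : Fin m, {z | (∑ i, a k i * z i) + b k * (t₀ + φr * D z) ≤ cc k} := by
      ext z
      simp only [hA, Set.mem_setOf_eq, Set.mem_iInter]
      exact hP z (t₀ + φr * D z)
    rw [this]
    refine isClosed_iInter fun k => isClosed_le ?_ continuous_const
    refine Continuous.add ?_ ?_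
    · exact continuous_finset_sum _ fun i _ => continuous_const.mul (continuous_apply i)
    · exact continuous_const.mul (continuous_const.add (continuous_const.mul hDcont))
  obtain ⟨Cb, hCb⟩ := hbdd
  have hAsub : A ⊆ Metric.closedBall 0 (max Cb 0) := by
    intro z hz
    have hzt : f z ≠ ⊤ := ne_top_of_le_ne_top (EReal.coe_ne_top _) hz
    rw [mem_closedBall_zero_iff]
    rw [pi_norm_le_iff_of_nonneg (le_max_right Cb 0)]
    intro s
    rw [Real.norm_eq_abs]
    exact (hCb z hzt s).trans (le_max_left _ _)
  have hAcomp : IsCompact A :=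
    (isCompact_closedBall 0 (max Cb 0)).of_isClosed_subset hAclosed hAsub
  obtain ⟨z, hzA, hzmin⟩ := hAcomp.exists_isMinOn ⟨z₀, hz₀A⟩ hDcont.continuousOn
  rw [isMinOn_iff] at hzmin
  have hzA' : f z ≤ ((t₀ + φr * D z : ℝ) : EReal) := hzA
  have hztop : f z ≠ ⊤ := ne_top_of_le_ne_top (EReal.coe_ne_top _) hzA'
  have hzr : f z = (((f z).toReal : ℝ) : EReal) := (EReal.coe_toReal hztop (hbot z)).symm
  set r := (f z).toReal with hrr
  have hrA : r ≤ t₀ + φr * D z := by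
    rw [hzr, EReal.coe_le_coe_iff] at hzA'; exact hzA'
  by_cases hcase : ∀ s, z s ≤ y s
  · -- z dominated by y : exchange axiom gives contradiction
    have hDz : D z = 0 := by
      apply Finset.sum_eq_zero
      intro s _
      exact max_eq_right (by linarith [hcase s])
    have hrc : r < c := by
      have h2 := hrA
      rw [hDz] at h2
      have : r ≤ t₀ := by linarith
      linarith
    have hzy : z ≠ y := by
      intro h
      have h2 := hzr
      rw [h, hc] at h2
      rw [EReal.coe_eq_coe_iff] at h2
      linarith
    obtain ⟨s, hs⟩ : ∃ s, z s ≠ y s := Function.ne_iff.mp hzy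
    have hs' : z s < y s := lt_of_le_of_ne (hcase s) hs
    obtain ⟨j', hj', -⟩ := hM.2 y z hy hztop s hs'
    exact absurd hj' (not_lt.mpr (hcase j'))
  · -- there is i' with z i' > y i' : exchange towards y reduces D within A
    push_neg at hcase
    obtain ⟨i', hi'⟩ := hcase
    have hi2 := hi'
    obtain ⟨j', hj', ε₀, hε₀, hexc⟩ := hM.2 z y hztop hy i' hi2
    have hij' : i' ≠ j' := by
      intro h
      rw [h] at hi2
      exact absurd hj' (not_lt.mpr hi2.le)
    set ε := min ε₀ (min (z i' - y i') (y j' - z j')) with hε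
    have hεpos : 0 < ε := lt_min hε₀ (lt_min (by linarith) (by linarith))
    have hεi : ε ≤ z i' - y i' := (min_le_right _ _).trans (min_le_left _ _)
    have hεj : ε ≤ y j' - z j' := (min_le_right _ _).trans (min_le_right _ _)
    have hsum := hexc ε hεpos.le (min_le_left _ _)
    set z' := z - ε • (chiR i' - chiR j') with hz'def
    set w := y + ε • (chiR i' - chiR j') with hwdef
    have hwlow : (↑(c + ε * φr) : EReal) ≤ f w :=
      quot_lower f hbot y c φr hc hφ i' j' ε hεpos
    have hwtop : f w ≠ ⊤ := by
      intro h
      rw [h, EReal.add_top_of_ne_bot (hbot z'), hzr, hc, ← EReal.coe_add] at hsum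
      exact (EReal.coe_ne_top _) (top_le_iff.mp hsum)
    have hz'top : f z' ≠ ⊤ := by
      intro h
      rw [h, EReal.top_add_of_ne_bot (hbot w), hzr, hc, ← EReal.coe_add] at hsum
      exact (EReal.coe_ne_top _) (top_le_iff.mp hsum)
    have hwr : f w = (((f w).toReal : ℝ) : EReal) := (EReal.coe_toReal hwtop (hbot w)).symm
    have hz'r : f z' = (((f z').toReal : ℝ) : EReal) := (EReal.coe_toReal hz'top (hbot z')).symm
    set u := (f w).toReal with hu0
    set r' := (f z').toReal with hr'0
    have hu : c + ε * φr ≤ u := by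
      rw [hwr, EReal.coe_le_coe_iff] at hwlow; exact hwlow
    have hru : r' + u ≤ r + c := by
      rw [hwr, hz'r, hzr, hc, ← EReal.coe_add, ← EReal.coe_add, EReal.coe_le_coe_iff] at hsum
      exact hsum
    have hterm : ∀ s : Fin n,
        max (z' s - y s) 0 = max (z s - y s) 0 - (if s = i' then ε else 0) := by
      intro s
      have hz's : z' s = z s - ε * ((if s = i' then (1:ℝ) else 0) - (if s = j' then 1 else 0)) := by
        simp [hz'def, chiR]
      by_cases h1 : s = i'
      · subst h1
        rw [if_neg hij', if_pos rfl] at hz's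
        rw [hz's, if_pos rfl]
        rw [max_eq_left (by linarith), max_eq_left (by linarith)]
        ring
      · by_cases h2 : s = j'
        · subst h2
          rw [if_neg h1, if_pos rfl] at hz's
          rw [hz's, if_neg h1]
          rw [max_eq_right (by linarith), max_eq_right (by linarith)]
          ring
        · rw [if_neg h1, if_neg h2] at hz's
          rw [hz's, if_neg h1]
          ring_nf
    have hDz' : D z' = D z - ε := by
      simp only [hD]
      rw [Finset.sum_congr rfl (fun s _ => hterm s), Finset.sum_sub_distrib]
      rw [Finset.sum_ite_eq' Finset.univ i' (fun _ => ε)]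
      simp
    have hz'A : z' ∈ A := by
      show f z' ≤ _
      rw [hz'r, EReal.coe_le_coe_iff, hDz']
      nlinarith [hrA, hu, hru]
    have hfin := hzmin z' hz'A
    rw [hDz'] at hfin
    linarith

/-- Monotonicity of the steepest descent slope under a long step: if `+χ_i - χ_j` is a
steepest descent direction at `y` with `φ_ℝ(y) < 0` and
`f(y + λ(χ_i - χ_j)) - f(y) = λ φ_ℝ(y)` for some `λ > 0`, then
`φ_ℝ(y + λ(χ_i - χ_j)) ≥ φ_ℝ(y)`. -/
theorem statement15 {n : ℕ} (hn : 1 ≤ n) (f : (Fin n → ℝ) → EReal)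
    (hbot : NoBotR f) (hM : PolyMConvex f) (hbdd : BddDomR f)
    (y : Fin n → ℝ) (hy : f y ≠ ⊤) (hphi : phiRp f y < 0)
    (i j : Fin n) (hij : i ≠ j) (hd : slopeR f y i j = phiRp f y)
    (lam : ℝ) (hlam : 0 < lam)
    (hstep : f (y + lam • (chiR i - chiR j)) - f y = (lam : EReal) * phiRp f y) :
    phiRp f y ≤ phiRp f (y + lam • (chiR i - chiR j)) := by
  have hc : f y = (((f y).toReal : ℝ) : EReal) := (EReal.coe_toReal hy (hbot y)).symm
  set c := (f y).toReal with hc0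
  set yh := y + lam • (chiR i - chiR j) with hyh
  -- phiRp f y is a real number
  have hsub_ne_bot : f yh - f y ≠ ⊥ := by
    intro hbad
    rw [hc] at hbad
    rcases eq_or_ne (f yh) ⊤ with h | h
    · rw [h, EReal.top_sub_coe] at hbad
      simp at hbad
    · rw [← EReal.coe_toReal h (hbot yh), ← EReal.coe_sub] at hbad
      exact EReal.coe_ne_bot _ hbad
  have hphibot : phiRp f y ≠ ⊥ := by
    intro h
    rw [h, EReal.coe_mul_bot_of_pos (by exact_mod_cast hlam)] at hstep
    exact hsub_ne_bot hstep
  have hphitop : phiRp f y ≠ ⊤ := ne_top_of_lt hphi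
  have hφ : phiRp f y = (((phiRp f y).toReal : ℝ) : EReal) := (EReal.coe_toReal hphitop hphibot).symm
  set φr := (phiRp f y).toReal with hφ0
  have hφneg : φr < 0 := by
    rw [hφ] at hphi
    exact_mod_cast hphi
  -- value of f at yh
  have hyhval : f yh = ((c + lam * φr : ℝ) : EReal) := by
    rcases eq_or_ne (f yh) ⊤ with h | h
    · exfalso
      rw [h, hc, EReal.top_sub_coe, hφ, ← EReal.coe_mul] at hstep
      exact EReal.coe_ne_top _ hstep.symm
    · rw [← EReal.coe_toReal h (hbot yh), hc, ← EReal.coe_sub, hφ, ← EReal.coe_mul,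
        EReal.coe_eq_coe_iff] at hstep
      rw [← EReal.coe_toReal h (hbot yh), EReal.coe_eq_coe_iff]
      linarith
  have hyhtop : f yh ≠ ⊤ := by rw [hyhval]; exact EReal.coe_ne_top _
  have hstar := star_lemma f hbot hM hbdd y c φr hc (le_of_eq hφ.symm)
  -- main bound
  rw [hφ]
  refine le_iInf fun k => le_iInf fun l => le_iInf fun α => ?_
  set x := yh + α.1 • (chiR k - chiR l) with hx
  rcases eq_or_ne (f x) ⊤ with hxT | hxT
  · rw [hxT, hyhval, EReal.top_sub_coe, EReal.top_mul_of_pos]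
    · exact le_top
    · exact_mod_cast inv_pos.mpr α.2
  · have hxr : f x = (((f x).toReal : ℝ) : EReal) := (EReal.coe_toReal hxT (hbot x)).symm
    set r := (f x).toReal with hr0
    have hstar2 : c + φr * ∑ s, max (x s - y s) 0 ≤ r := by
      have := hstar x hxT
      rw [hxr, EReal.coe_le_coe_iff] at this
      exact this
    have hDle : ∑ s, max (x s - y s) 0 ≤ lam + α.1 := by
      have hbound : ∀ s : Fin n, max (x s - y s) 0 ≤
          lam * (if s = i then (1:ℝ) else 0) + α.1 * (if s = k then (1:ℝ) else 0) := by
        intro s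
        have hxs : x s - y s = lam * ((if s = i then (1:ℝ) else 0) - (if s = j then 1 else 0))
            + α.1 * ((if s = k then (1:ℝ) else 0) - (if s = l then 1 else 0)) := by
          simp [hx, hyh, chiR]
          ring
        apply max_le
        · rw [hxs]
          have h1 : (0:ℝ) ≤ if s = j then (1:ℝ) else 0 := by positivity
          have h2 : (0:ℝ) ≤ if s = l then (1:ℝ) else 0 := by positivity
          nlinarith [α.2]
        · split_ifs <;> nlinarith [α.2, hlam]
      calc ∑ s, max (x s - y s) 0
          ≤ ∑ s : Fin n, (lam * (if s = i then (1:ℝ) else 0) + α.1 * (if s = k then (1:ℝ) else 0)) :=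
            Finset.sum_le_sum fun s _ => hbound s
        _ = lam + α.1 := by
            rw [Finset.sum_add_distrib]
            simp [mul_ite, mul_one, mul_zero, Finset.sum_ite_eq']
    rw [hxr, hyhval, ← EReal.coe_sub, ← EReal.coe_mul, EReal.coe_le_coe_iff]
    have hkey : φr * α.1 ≤ r - (c + lam * φr) := by
      nlinarith [mul_nonneg (neg_nonneg.mpr hφneg.le) (sub_nonneg.mpr hDle)]
    have h4 : φr * α.1 * α.1⁻¹ ≤ (r - (c + lam * φr)) * α.1⁻¹ :=
      mul_le_mul_of_nonneg_right hkey (inv_pos.mpr α.2).le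
    rwa [mul_assoc, mul_inv_cancel₀ (ne_of_gt α.2), mul_one] at h4
end
end

section
/- Let f : ℝ^n → ℝ ∪ {+∞} be a polyhedral M-convex function with bounded nonempty effective domain. Let y ∈ dom f with φ_ℝ(y) < 0, let i, j ∈ N be distinct elements such that f'_ℝ(y; i, j) = φ_ℝ(y), let λ > 0 satisfy f(y + λ(χ_i − χ_j)) − f(y) = λ φ_ℝ(y), and set ŷ = y + λ(χ_i − χ_j). Then for all distinct h, k ∈ N, it holds that f'_ℝ(ŷ; h, k) ≥ φ_ℝ(y); moreover, if f'_ℝ(ŷ; h, k) = φ_ℝ(y), then f'_ℝ(ŷ; h, k) = φ_ℝ(ŷ) (i.e., +χ_h − χ_k is a steepest descent direction at ŷ) and k ≠ i and h ≠ j. -/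
noncomputable section

open scoped BigOperators

lemma sum_chiR {n : ℕ} (i : Fin n) : ∑ p, chiR i p = 1 := by simp [chiR]

lemma ereal_le_sub_coe {A : EReal} {b c : ℝ} (h : ((b + c:ℝ):EReal) ≤ A) :
    (c:EReal) ≤ A - (b:EReal) := by
  induction A using EReal.rec with
  | bot => exact absurd (le_bot_iff.mp h) (EReal.coe_ne_bot _)
  | top => rw [EReal.top_sub_coe]; exact le_top
  | coe a =>    rw [EReal.coe_le_coe_iff] at h
                rw [show (a:EReal) - (b:EReal) = ((a - b:ℝ):EReal) by norm_cast,
                  EReal.coe_le_coe_iff]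
                linarith

lemma sum_shift {n : ℕ} (y : Fin n → ℝ) (i j : Fin n) (c : ℝ) :
    ∑ p, (y + c • (chiR i - chiR j)) p = ∑ p, y p := by
  have : ∀ p, (y + c • (chiR i - chiR j)) p = y p + (c * chiR i p - c * chiR j p) := by
    intro p
    simp [Pi.add_apply, Pi.smul_apply, Pi.sub_apply, smul_eq_mul]
    ring
  rw [Finset.sum_congr rfl fun p _ => this p, Finset.sum_add_distrib,
    Finset.sum_sub_distrib, ← Finset.mul_sum, ← Finset.mul_sum, sum_chiR, sum_chiR]
  ring

lemma quot_ge {X : EReal} {c α : ℝ} (hα : 0 < α) (h : ((c*α : ℝ):EReal) ≤ X) :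
    (c:EReal) ≤ X * ((α⁻¹:ℝ):EReal) := by
  induction X using EReal.rec with
  | bot => exact absurd (le_bot_iff.mp h) (EReal.coe_ne_bot _)
  | top => rw [EReal.top_mul_coe_of_pos (inv_pos.2 hα)]; exact le_top
  | coe r =>
    rw [← EReal.coe_mul, EReal.coe_le_coe_iff] at *
    calc c = c * α * α⁻¹ := by field_simp
    _ ≤ r * α⁻¹ := by apply mul_le_mul_of_nonneg_right h (le_of_lt (inv_pos.2 hα))

lemma slope_le_quot {n : ℕ} (f : (Fin n → ℝ) → EReal) (x : Fin n → ℝ) (i j : Fin n)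
    {ε : ℝ} (hε : 0 < ε) :
    slopeR f x i j ≤ (f (x + ε • (chiR i - chiR j)) - f x) * ((ε⁻¹:ℝ):EReal) :=
  iInf_le (fun α : {a : ℝ // 0 < a} =>
    (f (x + α.1 • (chiR i - chiR j)) - f x) * (((α.1)⁻¹ : ℝ) : EReal)) ⟨ε, hε⟩

lemma slope_lb {n : ℕ} (f : (Fin n → ℝ) → EReal) (hbot : NoBotR f) {x : Fin n → ℝ}
    {i j : Fin n} {c : ℝ} (h : (c:EReal) ≤ slopeR f x i j) {ax : ℝ} (hx : f x = (ax:EReal))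
    {ε : ℝ} (hε : 0 < ε) : ((ax + ε*c : ℝ):EReal) ≤ f (x + ε • (chiR i - chiR j)) := by
  have h2 : (c:EReal) ≤ (f (x + ε • (chiR i - chiR j)) - f x) * ((ε⁻¹:ℝ):EReal) :=
    h.trans (slope_le_quot f x i j hε)
  by_cases hFt : f (x + ε • (chiR i - chiR j)) = ⊤
  · rw [hFt]; exact le_top
  · have hFr : f (x + ε • (chiR i - chiR j)) = ((f (x + ε • (chiR i - chiR j))).toReal : EReal) :=
      (EReal.coe_toReal hFt (hbot _)).symm
    set r := (f (x + ε • (chiR i - chiR j))).toReal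
    rw [hFr, hx] at h2
    rw [hFr]
    rw [show ((r:EReal) - (ax:EReal)) = ((r - ax : ℝ):EReal) by norm_cast, ← EReal.coe_mul,
      EReal.coe_le_coe_iff] at h2
    rw [EReal.coe_le_coe_iff]
    have h3 := mul_le_mul_of_nonneg_right h2 (le_of_lt hε)
    rw [mul_assoc, inv_mul_cancel₀ (ne_of_gt hε), mul_one] at h3
    linarith

lemma fconv {n : ℕ} (f : (Fin n → ℝ) → EReal) (hpoly : PolyhedralConvex f)
    (u v : Fin n → ℝ) (r s t : ℝ) (h0 : 0 ≤ t) (h1 : t ≤ 1)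
    (hu : f u ≤ (r:EReal)) (hv : f v ≤ (s:EReal)) :
    f ((1-t) • u + t • v) ≤ (((1-t)*r + t*s : ℝ):EReal) := by
  obtain ⟨-, m, a, b, c, hch⟩ := hpoly
  rw [hch] at hu hv ⊢
  intro k
  have h1' := hu k
  have h2' := hv k
  have e1 : ∑ i, a k i * ((1-t) • u + t • v) i
      = (1-t) * (∑ i, a k i * u i) + t * (∑ i, a k i * v i) := by
    rw [Finset.mul_sum, Finset.mul_sum, ← Finset.sum_add_distrib]
    apply Finset.sum_congr rfl
    intro p _
    simp only [Pi.add_apply, Pi.smul_apply, smul_eq_mul]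
    ring
  rw [e1]
  nlinarith [mul_le_mul_of_nonneg_left h1' (by linarith : (0:ℝ) ≤ 1 - t),
    mul_le_mul_of_nonneg_left h2' h0]

lemma ereal_add_coe_le {A : EReal} {c d : ℝ} (h : A + (c:EReal) ≤ (d:EReal)) :
    A ≤ ((d - c : ℝ):EReal) := by
  induction A using EReal.rec with
  | bot => exact bot_le
  | top => rw [EReal.top_add_coe] at h; exact absurd h (by simp)
  | coe a =>    rw [← EReal.coe_add, EReal.coe_le_coe_iff] at h
                rw [EReal.coe_le_coe_iff]; linarith

lemma lemB_s16 {n : ℕ} (f : (Fin n → ℝ) → EReal) (hbot : NoBotR f)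
    (hpoly : PolyhedralConvex f) (hexc : MExcR f) (hbdd : BddDomR f)
    (x z : Fin n → ℝ) (hx : f x ≠ ⊤) (hz : f z ≠ ⊤)
    (φ : ℝ) (hsl : ∀ i j, (φ : EReal) ≤ slopeR f x i j)
    (hsum : ∑ p, z p = ∑ p, x p) :
    f x + ((φ * ∑ p, max (z p - x p) 0 : ℝ) : EReal) ≤ f z := by
  have hxr : f x = (((f x).toReal : ℝ) : EReal) := (EReal.coe_toReal hx (hbot x)).symm
  set ax := (f x).toReal with hax
  have hzr : f z = (((f z).toReal : ℝ) : EReal) := (EReal.coe_toReal hz (hbot z)).symm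
  set fz := (f z).toReal with hfz
  set D : (Fin n → ℝ) → ℝ := fun u => ∑ p, max (u p - x p) 0 with hD
  have hDcont : Continuous D := by
    apply continuous_finset_sum
    intro p _
    exact ((continuous_apply p).sub continuous_const).max continuous_const
  set r : (Fin n → ℝ) → ℝ := fun u => fz + φ * (D u - D z) with hr
  have hrcont : Continuous r :=
    continuous_const.add (continuous_const.mul (hDcont.sub continuous_const))
  set K : Set (Fin n → ℝ) := {u | (∑ p, u p = ∑ p, x p) ∧ f u ≤ ((r u : ℝ) : EReal)} with hK
  have hKnt : ∀ u ∈ K, f u ≠ ⊤ := by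
    intro u hu hT
    have := hu.2
    rw [hT] at this
    exact absurd this (by simp)
  have hzK : z ∈ K := by
    refine ⟨hsum, ?_⟩
    rw [hzr]
    simp [hr]
  obtain ⟨-, m, a, b, c, hch⟩ := hpoly
  have hKcl : IsClosed K := by
    have hKeq : K = {u | ∑ p, u p = ∑ p, x p} ∩
        ⋂ k, {u | ∑ i, a k i * u i + b k * r u ≤ c k} := by
      ext u
      simp only [Set.mem_setOf_eq, Set.mem_inter_iff, Set.mem_iInter, hK]
      exact and_congr Iff.rfl (hch u (r u))
    rw [hKeq]
    refine IsClosed.inter (isClosed_eq (continuous_finset_sum _ fun p _ => continuous_apply p)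
      continuous_const) (isClosed_iInter fun k => isClosed_le ?_ continuous_const)
    exact (continuous_finset_sum _ fun p _ => continuous_const.mul (continuous_apply p)).add
      (continuous_const.mul hrcont)
  obtain ⟨C, hC⟩ := hbdd
  have hKsub : K ⊆ Metric.closedBall 0 (max C 0) := by
    intro u hu
    rw [mem_closedBall_zero_iff]
    rw [pi_norm_le_iff_of_nonneg (le_max_right C 0)]
    intro p
    exact (hC u (hKnt u hu) p).trans (le_max_left _ _)
  have hKcomp : IsCompact K := (isCompact_closedBall _ _).of_isClosed_subset hKcl hKsub
  obtain ⟨w, hwK, hwmin⟩ := hKcomp.exists_isMinOn ⟨z, hzK⟩ hDcont.continuousOn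
  have hwnt : f w ≠ ⊤ := hKnt w hwK
  have hwr : f w = (((f w).toReal : ℝ):EReal) := (EReal.coe_toReal hwnt (hbot w)).symm
  set fw := (f w).toReal with hfw
  have hDw0 : D w = 0 := by
    by_contra hne
    have hDpos : 0 < D w :=
      lt_of_le_of_ne (Finset.sum_nonneg fun p _ => le_max_right _ _) (Ne.symm hne)
    have hp : ∃ p, x p < w p := by
      by_contra hnp
      push_neg at hnp
      have : D w ≤ 0 := Finset.sum_nonpos fun p _ => by
        have := hnp p
        rw [max_le_iff]
        constructor <;> linarith
      linarith
    obtain ⟨p, hp⟩ := hp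
    obtain ⟨q, hq, ε₀, hε₀, hexch⟩ := hexc w x hwnt hx p hp
    have hpq : p ≠ q := fun hpq => by rw [hpq] at hp; linarith
    set ε := min ε₀ (min (w p - x p) (x q - w q)) with hε
    have hεpos : 0 < ε := by
      apply lt_min hε₀
      apply lt_min <;> linarith
    have hεwp : ε ≤ w p - x p := le_trans (min_le_right _ _) (min_le_left _ _)
    have hεxq : ε ≤ x q - w q := le_trans (min_le_right _ _) (min_le_right _ _)
    have hkey := hexch ε (le_of_lt hεpos) (min_le_left _ _)
    set u' := w - ε • (chiR p - chiR q) with hu'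
    have hslope := slope_lb f hbot (hsl p q) hxr hεpos
    have h5 : f u' + ((ax + ε*φ : ℝ):EReal) ≤ ((fw + ax : ℝ):EReal) := by
      calc f u' + ((ax + ε*φ : ℝ):EReal)
          ≤ f u' + f (x + ε • (chiR p - chiR q)) := add_le_add le_rfl hslope
        _ ≤ f w + f x := hkey
        _ = ((fw + ax : ℝ):EReal) := by rw [hwr, hxr]; norm_cast
    have h6 : f u' ≤ ((fw + ax - (ax + ε*φ) : ℝ):EReal) := ereal_add_coe_le h5
    have hu'app : ∀ t : Fin n, u' t = w t - ε * ((if t = p then 1 else 0) - (if t = q then 1 else 0)) := by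
      intro t
      simp [hu', chiR, Pi.sub_apply, Pi.smul_apply, smul_eq_mul]
    have hDu' : D u' = D w - ε := by
      have hterm : ∀ t : Fin n,
          max (u' t - x t) 0 = max (w t - x t) 0 - ε * (if t = p then 1 else 0) := by
        intro t
        rw [hu'app t]
        by_cases htp : t = p
        · subst htp
          rw [if_pos rfl, if_neg hpq]
          rw [max_eq_left (by linarith), max_eq_left (by linarith)]
          ring
        · by_cases htq : t = q
          · subst htq
            rw [if_neg htp, if_pos rfl]
            rw [max_eq_right (by linarith), max_eq_right (by linarith)]
            ring
          · rw [if_neg htp, if_neg htq]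
            rw [show w t - ε * (0 - 0) - x t = w t - x t by ring, mul_zero, sub_zero]
      have e2 : D u' = ∑ t, (max (w t - x t) 0 - ε * (if t = p then 1 else 0)) := by
        simp only [hD]
        exact Finset.sum_congr rfl fun t _ => hterm t
      rw [e2, Finset.sum_sub_distrib, ← Finset.mul_sum]
      simp [Finset.sum_ite_eq']
      rfl
    have hu'K : u' ∈ K := by
      constructor
      · have e3 : ∑ t, u' t = ∑ t, (w t - ε * ((if t = p then 1 else 0) - (if t = q then 1 else 0))) :=
          Finset.sum_congr rfl fun t _ => hu'app t
        rw [e3, Finset.sum_sub_distrib, ← Finset.mul_sum]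
        have e4 : ∑ t : Fin n, ((if t = p then (1:ℝ) else 0) - (if t = q then 1 else 0)) = 0 := by
          rw [Finset.sum_sub_distrib]
          simp [Finset.sum_ite_eq']
        rw [e4, mul_zero, sub_zero]
        exact hwK.1
      · have hfwru : fw ≤ r w := by
          have := hwK.2
          rw [hwr] at this
          exact EReal.coe_le_coe_iff.mp this
        refine h6.trans ?_
        rw [EReal.coe_le_coe_iff]
        have : r u' = fz + φ * (D w - ε - D z) := by rw [hr]; simp only [hDu']
        rw [this]
        simp only [hr] at hfwru
        linarith
    have hcontr := (isMinOn_iff.mp hwmin) u' hu'K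
    rw [hDu'] at hcontr
    linarith
  -- D w = 0 : conclude w = x
  have hwle : ∀ t, w t ≤ x t := by
    intro t
    have := (Finset.sum_eq_zero_iff_of_nonneg (fun p _ => le_max_right (w p - x p) 0)).mp hDw0 t (Finset.mem_univ t)
    by_contra hgt
    push_neg at hgt
    rw [max_eq_left (by linarith)] at this
    linarith
  have hwx : w = x := by
    funext t
    have hsum0 : ∑ t, (x t - w t) = 0 := by
      rw [Finset.sum_sub_distrib, hwK.1]
      ring
    have := (Finset.sum_eq_zero_iff_of_nonneg (fun p _ => by linarith [hwle p])).mp hsum0 t (Finset.mem_univ t)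
    linarith
  have hfinal := hwK.2
  rw [hwx, hxr] at hfinal
  rw [EReal.coe_le_coe_iff] at hfinal
  have hDx : D x = 0 := by
    simp only [hD]
    simp
  rw [hr] at hfinal
  simp only [hDx] at hfinal
  rw [hxr, hzr, ← EReal.coe_add, EReal.coe_le_coe_iff]
  have hDzD : (∑ p, max (z p - x p) 0) = D z := rfl
  rw [hDzD]
  linarith

set_option maxHeartbeats 2000000 in
/-- After a long step in a steepest descent direction, every slope at
`ŷ = y + λ(χ_i - χ_j)` is at least `φ_ℝ(y)`; if a slope at `ŷ` equals `φ_ℝ(y)`, then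
the corresponding direction `+χ_h - χ_k` is a steepest descent direction at `ŷ`
and satisfies `k ≠ i` and `h ≠ j`. -/
theorem statement16 {n : ℕ} (hn : 1 ≤ n) (f : (Fin n → ℝ) → EReal)
    (hbot : NoBotR f) (hM : PolyMConvex f) (hbdd : BddDomR f)
    (y : Fin n → ℝ) (hy : f y ≠ ⊤) (hphi : phiRp f y < 0)
    (i j : Fin n) (hij : i ≠ j) (hd : slopeR f y i j = phiRp f y)
    (lam : ℝ) (hlam : 0 < lam)
    (hstep : f (y + lam • (chiR i - chiR j)) - f y = (lam : EReal) * phiRp f y) :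
    ∀ h k : Fin n, h ≠ k →
      phiRp f y ≤ slopeR f (y + lam • (chiR i - chiR j)) h k ∧
      (slopeR f (y + lam • (chiR i - chiR j)) h k = phiRp f y →
        slopeR f (y + lam • (chiR i - chiR j)) h k =
            phiRp f (y + lam • (chiR i - chiR j)) ∧
          k ≠ i ∧ h ≠ j) := by
  obtain ⟨hpoly, hexc⟩ := hM
  set yh := y + lam • (chiR i - chiR j) with hyhdef
  have hyr : f y = (((f y).toReal : ℝ) : EReal) := (EReal.coe_toReal hy (hbot y)).symm
  set ay := (f y).toReal with hay
  -- phiRp f y is a real number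
  have hLnb : f yh - f y ≠ ⊥ := by
    rw [hyr]
    by_cases hT : f yh = ⊤
    · rw [hT, EReal.top_sub_coe]; simp
    · rw [show f yh = (((f yh).toReal : ℝ):EReal) from (EReal.coe_toReal hT (hbot yh)).symm]
      rw [show (((f yh).toReal : ℝ):EReal) - (ay:EReal) = (((f yh).toReal - ay : ℝ):EReal)
        by norm_cast]
      exact EReal.coe_ne_bot _
  have hphib : phiRp f y ≠ ⊥ := by
    intro hb
    rw [hb] at hstep
    rw [EReal.coe_mul_bot_of_pos hlam] at hstep
    exact hLnb hstep
  have hphit : phiRp f y ≠ ⊤ := ne_top_of_lt hphi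
  have hφr : phiRp f y = (((phiRp f y).toReal : ℝ) : EReal) := (EReal.coe_toReal hphit hphib).symm
  set φ := (phiRp f y).toReal with hφdef
  have hφneg : φ < 0 := by
    rw [hφr] at hphi
    exact_mod_cast hphi
  -- f yh is real, equal to ay + lam * φ
  have hyht : f yh ≠ ⊤ := by
    intro hT
    rw [hT, hyr, EReal.top_sub_coe, hφr] at hstep
    rw [show ((lam:ℝ):EReal) * ((φ:ℝ):EReal) = ((lam * φ : ℝ):EReal) by norm_cast] at hstep
    exact EReal.top_ne_coe _ hstep
  have hyhr : f yh = ((ay + lam * φ : ℝ) : EReal) := by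
    have h1 := hstep
    rw [hyr, hφr, show f yh = (((f yh).toReal : ℝ):EReal) from (EReal.coe_toReal hyht (hbot yh)).symm] at h1
    rw [show (((f yh).toReal : ℝ):EReal) - (ay:EReal) = (((f yh).toReal - ay : ℝ):EReal) by norm_cast] at h1
    rw [show ((lam:ℝ):EReal) * ((φ:ℝ):EReal) = ((lam * φ : ℝ):EReal) by norm_cast] at h1
    rw [EReal.coe_eq_coe_iff] at h1
    rw [show f yh = (((f yh).toReal : ℝ):EReal) from (EReal.coe_toReal hyht (hbot yh)).symm]
    rw [EReal.coe_eq_coe_iff]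
    linarith
  set ayh := ay + lam * φ with hayh
  -- slopes at y are all ≥ φ
  have hslopes : ∀ p q : Fin n, (φ:EReal) ≤ slopeR f y p q := by
    intro p q
    rw [← hφr]
    unfold phiRp
    exact iInf_le_of_le p (iInf_le (fun q' => slopeR f y p q') q)
  -- sums
  have hsumz : ∀ (h k : Fin n) (α : ℝ), ∑ p, (yh + α • (chiR h - chiR k)) p = ∑ p, y p := by
    intro h k α
    rw [sum_shift yh h k α, hyhdef, sum_shift y i j lam]
  -- key lower bound via lemB
  have key : ∀ (h k : Fin n) (α B : ℝ), 0 < α →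
      ((∑ p, max ((yh + α • (chiR h - chiR k)) p - y p) 0) ≤ B) →
      ((ay + φ * B : ℝ) : EReal) ≤ f (yh + α • (chiR h - chiR k)) := by
    intro h k α B hα hB
    by_cases hzT : f (yh + α • (chiR h - chiR k)) = ⊤
    · rw [hzT]; exact le_top
    have hs := lemB_s16 f hbot hpoly hexc hbdd y _ hy hzT φ hslopes (hsumz h k α)
    rw [hyr] at hs
    refine le_trans ?_ hs
    rw [← EReal.coe_add, EReal.coe_le_coe_iff]
    have := mul_le_mul_of_nonpos_left hB (le_of_lt hφneg)
    linarith
  -- pointwise description of z - y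
  have hzyp : ∀ (h k : Fin n) (α : ℝ) (p : Fin n),
      (yh + α • (chiR h - chiR k)) p - y p
        = lam * (chiR i p - chiR j p) + α * (chiR h p - chiR k p) := by
    intro h k α p
    rw [hyhdef]
    simp [Pi.add_apply, Pi.smul_apply, Pi.sub_apply, smul_eq_mul]
    ring
  -- general bound D ≤ lam + α
  have hDgen : ∀ (h k : Fin n) (α : ℝ), 0 < α →
      ∑ p, max ((yh + α • (chiR h - chiR k)) p - y p) 0 ≤ lam + α := by
    intro h k α hα
    calc ∑ p, max ((yh + α • (chiR h - chiR k)) p - y p) 0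
        ≤ ∑ p, (lam * chiR i p + α * chiR h p) := by
          refine Finset.sum_le_sum fun p _ => ?_
          rw [hzyp h k α p]
          apply max_le
          · simp only [chiR]; split_ifs <;> nlinarith
          · simp only [chiR]; split_ifs <;> nlinarith
      _ = lam + α := by
          rw [Finset.sum_add_distrib, ← Finset.mul_sum, ← Finset.mul_sum, sum_chiR, sum_chiR]
          ring
  -- Goal 1 : every slope at yh is ≥ φ
  have G1 : ∀ p q : Fin n, (φ:EReal) ≤ slopeR f yh p q := by
    intro p q
    unfold slopeR
    refine le_iInf fun α => ?_
    apply quot_ge α.2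
    rw [hyhr]
    apply ereal_le_sub_coe
    have hk := key p q α.1 (lam + α.1) α.2 (hDgen p q α.1 α.2)
    rw [show (ayh + φ * α.1 : ℝ) = (ay + φ * (lam + α.1) : ℝ) by rw [hayh]; ring]
    exact hk
  -- slopes through bounded-by-lam directions are nonnegative
  have nonneg_slope : ∀ (h k : Fin n),
      (∀ α : ℝ, 0 < α → α ≤ lam →
        ∑ p, max ((yh + α • (chiR h - chiR k)) p - y p) 0 ≤ lam) →
      (0:EReal) ≤ slopeR f yh h k := by
    intro h k hDb
    have QB : ∀ α : ℝ, 0 < α → ((ayh : ℝ):EReal) ≤ f (yh + α • (chiR h - chiR k)) := by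
      intro α hα
      by_cases hαle : α ≤ lam
      · have hk := key h k α lam hα (hDb α hα hαle)
        rw [show (ayh : ℝ) = (ay + φ * lam : ℝ) by rw [hayh]; ring]
        exact hk
      · push_neg at hαle
        by_cases hT : f (yh + α • (chiR h - chiR k)) = ⊤
        · rw [hT]; exact le_top
        have hsr : f (yh + α • (chiR h - chiR k))
            = (((f (yh + α • (chiR h - chiR k))).toReal : ℝ):EReal) :=
          (EReal.coe_toReal hT (hbot _)).symm
        set s := (f (yh + α • (chiR h - chiR k))).toReal with hs
        have ht0 : (0:ℝ) < lam / α := div_pos hlam (hlam.trans hαle)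
        have ht1 : lam / α ≤ 1 := by
          rw [div_le_one (hlam.trans hαle)]
          exact le_of_lt hαle
        have htα : (lam / α) * α = lam := div_mul_cancel₀ lam (ne_of_gt (hlam.trans hαle))
        have hcomb : (1 - lam / α) • yh + (lam / α) • (yh + α • (chiR h - chiR k))
            = yh + ((lam / α) * α) • (chiR h - chiR k) := by module
        rw [htα] at hcomb
        have hconv := fconv f hpoly yh (yh + α • (chiR h - chiR k)) ayh s (lam / α)
          (le_of_lt ht0) ht1 (le_of_eq hyhr) (le_of_eq hsr)
        rw [hcomb] at hconv
        have hstep1 : ((ay + φ * lam : ℝ):EReal) ≤ f (yh + lam • (chiR h - chiR k)) :=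
          key h k lam lam hlam (hDb lam hlam le_rfl)
        have hle : (ay + φ * lam : ℝ) ≤ (1 - lam / α) * ayh + (lam / α) * s :=
          EReal.coe_le_coe_iff.mp (hstep1.trans hconv)
        rw [hsr, EReal.coe_le_coe_iff]
        rw [hayh] at hle ⊢
        nlinarith
    unfold slopeR
    refine le_iInf fun α => ?_
    apply quot_ge α.2
    rw [hyhr]
    apply ereal_le_sub_coe
    rw [show (ayh + 0 * α.1 : ℝ) = (ayh:ℝ) by ring]
    exact QB α.1 α.2
  -- the two refined bounds
  have hDki : ∀ (h : Fin n), h ≠ i → ∀ α : ℝ, 0 < α → α ≤ lam →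
      ∑ p, max ((yh + α • (chiR h - chiR i)) p - y p) 0 ≤ lam := by
    intro h hhi α hα hαle
    calc ∑ p, max ((yh + α • (chiR h - chiR i)) p - y p) 0
        ≤ ∑ p, ((lam - α) * chiR i p + α * chiR h p) := by
          refine Finset.sum_le_sum fun p _ => ?_
          rw [hzyp h i α p]
          apply max_le
          · simp only [chiR]; split_ifs <;> nlinarith
          · simp only [chiR]; split_ifs <;> nlinarith
      _ = lam := by
          rw [Finset.sum_add_distrib, ← Finset.mul_sum, ← Finset.mul_sum, sum_chiR, sum_chiR]
          ring
  have hDhj : ∀ (k : Fin n), k ≠ j → ∀ α : ℝ, 0 < α → α ≤ lam →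
      ∑ p, max ((yh + α • (chiR j - chiR k)) p - y p) 0 ≤ lam := by
    intro k hkj α hα hαle
    calc ∑ p, max ((yh + α • (chiR j - chiR k)) p - y p) 0
        ≤ ∑ p, (lam * chiR i p) := by
          refine Finset.sum_le_sum fun p _ => ?_
          rw [hzyp j k α p]
          apply max_le
          · simp only [chiR]; split_ifs <;> nlinarith
          · simp only [chiR]; split_ifs <;> nlinarith
      _ = lam := by rw [← Finset.mul_sum, sum_chiR]; ring
  -- final assembly
  intro h k hhk
  constructor
  · rw [hφr]
    exact G1 h k
  · intro heq
    have heqφ : slopeR f yh h k = ((φ:ℝ):EReal) := by rw [heq, hφr]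
    have hki : k ≠ i := by
      intro hki
      subst hki
      have h0 : (0:EReal) ≤ slopeR f yh h k := nonneg_slope h k (hDki h hhk)
      rw [heqφ] at h0
      have : (0:ℝ) ≤ φ := by exact_mod_cast h0
      linarith
    have hhj : h ≠ j := by
      intro hhj
      subst hhj
      have h0 : (0:EReal) ≤ slopeR f yh h k := nonneg_slope h k (hDhj k (Ne.symm hhk))
      rw [heqφ] at h0
      have : (0:ℝ) ≤ φ := by exact_mod_cast h0
      linarith
    refine ⟨?_, hki, hhj⟩
    have hph : phiRp f yh = ((φ:ℝ):EReal) := by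
      apply le_antisymm
      · rw [← heqφ]
        unfold phiRp
        exact iInf_le_of_le h (iInf_le (fun q' => slopeR f yh h q') k)
      · unfold phiRp
        exact le_iInf fun p => le_iInf fun q => G1 p q
    rw [heqφ, hph]
end
end

section
/- Let f : ℝ^n → ℝ ∪ {+∞} be a polyhedral M-convex function with bounded nonempty effective domain, and let c ∈ ℝ. Let y ∈ dom f, and let i, j ∈ N be distinct elements such that f'_ℝ(y; i, j) > c. Then for every k ∈ N ∖ {i, j} and every λ > 0 such that ŷ := y + λ(χ_i − χ_k) ∈ dom f, it holds that f'_ℝ(ŷ; i, j) ≥ f'_ℝ(y; i, j) > c. -/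
noncomputable section

open scoped BigOperators

lemma ereal_real_cases (x : EReal) (hb : x ≠ ⊥) (ht : x ≠ ⊤) : ∃ r : ℝ, x = (r : EReal) := by
  induction x using EReal.rec with
  | bot => exact absurd rfl hb
  | coe r => exact ⟨r, rfl⟩
  | top => exact absurd rfl ht

lemma ereal_sum_real {a r : ℝ} {b : EReal} (hb : b ≠ ⊥) (h : (a : EReal) + b ≤ (r : EReal)) :
    ∃ w : ℝ, b = (w : EReal) ∧ a + w ≤ r := by
  induction b using EReal.rec with
  | bot => exact absurd rfl hb
  | coe w => exact ⟨w, rfl, by exact_mod_cast h⟩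
  | top =>
      rw [EReal.add_top_of_ne_bot (EReal.coe_ne_bot a)] at h
      exact absurd h (EReal.coe_lt_top r).not_ge

lemma real_le_of_forall_pos_le_add {x y : ℝ} (h : ∀ δ : ℝ, 0 < δ → x ≤ y + δ) : x ≤ y := by
  by_contra hxy
  push_neg at hxy
  have := h ((x - y) / 2) (by linarith)
  linarith

lemma sum_expand {n : ℕ} (a yh dd : Fin n → ℝ) (s : ℝ) :
    (∑ ii, a ii * (yh + s • dd) ii) = (∑ ii, a ii * yh ii) + s * (∑ ii, a ii * dd ii) := by
  simp only [Pi.add_apply, Pi.smul_apply, smul_eq_mul, mul_add, Finset.sum_add_distrib,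
    Finset.mul_sum]
  congr 1
  apply Finset.sum_congr rfl
  intro x _
  ring

/-- If `f'_ℝ(y; i, j) > c` and `ŷ = y + λ(χ_i - χ_k) ∈ dom f` for some `k ∉ {i, j}` and
`λ > 0`, then `f'_ℝ(ŷ; i, j) ≥ f'_ℝ(y; i, j) > c`. -/
theorem statement17 {n : ℕ} (hn : 1 ≤ n) (f : (Fin n → ℝ) → EReal)
    (hbot : NoBotR f) (hM : PolyMConvex f) (hbdd : BddDomR f) (c : ℝ)
    (y : Fin n → ℝ) (hy : f y ≠ ⊤)
    (i j : Fin n) (hij : i ≠ j) (hd : (c : EReal) < slopeR f y i j)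
    (k : Fin n) (hki : k ≠ i) (hkj : k ≠ j)
    (lam : ℝ) (hlam : 0 < lam)
    (hdom : f (y + lam • (chiR i - chiR k)) ≠ ⊤) :
    slopeR f y i j ≤ slopeR f (y + lam • (chiR i - chiR k)) i j ∧
      (c : EReal) < slopeR f (y + lam • (chiR i - chiR k)) i j := by
  obtain ⟨⟨-, m, a, b, cc, hiff⟩, hexc⟩ := hM
  set dd : Fin n → ℝ := chiR i - chiR j with hdd
  set yh : Fin n → ℝ := y + lam • (chiR i - chiR k) with hyh
  obtain ⟨B, hB⟩ := ereal_real_cases (f y) (hbot y) hy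
  obtain ⟨By, hBy⟩ := ereal_real_cases (f yh) (hbot yh) hdom
  -- Lemma A : lower bound at y from the slope
  have lemA : ∀ r : ℝ, (r : EReal) < slopeR f y i j → ∀ ε : ℝ, 0 < ε →
      ((B + ε * r : ℝ) : EReal) ≤ f (y + ε • dd) := by
    intro r hr ε hε
    have h1 : (r : EReal) < (f (y + ε • dd) - f y) * ((ε⁻¹ : ℝ) : EReal) :=
      lt_of_lt_of_le hr (iInf_le _ (⟨ε, hε⟩ : {a : ℝ // 0 < a}))
    by_cases htop : f (y + ε • dd) = ⊤
    · rw [htop]; exact le_top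
    obtain ⟨V, hV⟩ := ereal_real_cases _ (hbot _) htop
    rw [hV, hB, ← EReal.coe_sub, ← EReal.coe_mul, EReal.coe_lt_coe_iff] at h1
    rw [hV, EReal.coe_le_coe_iff]
    rw [← div_eq_mul_inv] at h1
    have h2 := (lt_div_iff₀ hε).mp h1
    linarith
  -- Exchange lemma with forced index i
  have lemEx : ∀ t : ℝ, 0 < t → f (yh + t • dd) ≠ ⊤ →
      ∃ ε : ℝ, 0 < ε ∧ ε ≤ t ∧
        f (y + ε • dd) + f (yh + (t - ε) • dd) ≤ f y + f (yh + t • dd) := by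
    intro t ht htop
    have hXj : (yh + t • dd) j < y j := by
      simp [hyh, hdd, chiR, hij.symm, Ne.symm hkj]
      linarith
    obtain ⟨j₀, hj₀, ε₀, hε₀, hineq⟩ := hexc y (yh + t • dd) hy htop j hXj
    have hj₀i : j₀ = i := by
      by_contra hne
      have hle : (yh + t • dd) j₀ ≤ y j₀ := by
        simp [hyh, hdd, chiR, hne]
        split_ifs <;> nlinarith
      exact absurd hj₀ (not_lt.mpr hle)
    refine ⟨min ε₀ t, lt_min hε₀ ht, min_le_right _ _, ?_⟩
    have h2 := hineq (min ε₀ t) (le_of_lt (lt_min hε₀ ht)) (min_le_left _ _)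
    rw [hj₀i] at h2
    have e1 : y - (min ε₀ t) • (chiR j - chiR i) = y + (min ε₀ t) • dd := by
      funext mm; simp [hdd, chiR]; ring
    have e2 : (yh + t • dd) + (min ε₀ t) • (chiR j - chiR i) = yh + (t - min ε₀ t) • dd := by
      funext mm; simp [hdd, chiR]; ring
    rw [e1, e2] at h2
    exact h2
  -- Main estimate
  have main : ∀ r : ℝ, (r : EReal) < slopeR f y i j → (r : EReal) ≤ slopeR f yh i j := by
    intro r hr
    rw [slopeR]
    apply le_iInf
    rintro ⟨α, hα⟩
    rw [← hdd]
    show (r : EReal) ≤ (f (yh + α • dd) - f yh) * ((α⁻¹ : ℝ) : EReal)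
    by_cases htop : f (yh + α • dd) = ⊤
    · rw [htop, hBy, EReal.top_sub_coe,
        EReal.top_mul_of_pos (by exact_mod_cast inv_pos.mpr hα : (0 : EReal) < ((α⁻¹ : ℝ) : EReal))]
      exact le_top
    obtain ⟨A, hA⟩ := ereal_real_cases _ (hbot _) htop
    -- bootstrap along the segment
    set S : Set ℝ := {t | 0 ≤ t ∧ t ≤ α ∧ f (yh + t • dd) ≤ ((A - (α - t) * r : ℝ) : EReal)}
      with hS
    have hαS : α ∈ S := ⟨le_of_lt hα, le_refl α, by rw [hA]; norm_num⟩
    have hbddS : BddBelow S := ⟨0, fun t ht => ht.1⟩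
    set T := sInf S with hT
    have hT0 : 0 ≤ T := le_csInf ⟨α, hαS⟩ (fun t ht => ht.1)
    have hTα : T ≤ α := csInf_le hbddS hαS
    have hTS : f (yh + T • dd) ≤ ((A - (α - T) * r : ℝ) : EReal) := by
      rw [hiff]
      intro km
      apply real_le_of_forall_pos_le_add
      intro δ hδ
      set q : ℝ := (∑ ii, a km ii * dd ii) + b km * r with hq
      have hlt : sInf S < T + δ / (|q| + 1) := by
        rw [← hT]
        have : 0 < δ / (|q| + 1) := div_pos hδ (by positivity)
        linarith
      obtain ⟨t, htS, htlt⟩ := exists_lt_of_csInf_lt ⟨α, hαS⟩ hlt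
      have htT : T ≤ t := csInf_le hbddS htS
      have h3 : (∑ ii, a km ii * (yh + t • dd) ii) + b km * (A - (α - t) * r) ≤ cc km :=
        (hiff _ _).mp htS.2.2 km
      rw [sum_expand] at h3 ⊢
      have habs : -q ≤ |q| := neg_le_abs q
      have hmul : (t - T) * (-q) ≤ (t - T) * (|q| + 1) := by
        apply mul_le_mul_of_nonneg_left ?_ (by linarith)
        linarith
      have hmul2 : (t - T) * (|q| + 1) ≤ (δ / (|q| + 1)) * (|q| + 1) := by
        apply mul_le_mul_of_nonneg_right (by linarith) (by positivity)
      rw [div_mul_cancel₀ _ (by positivity : |q| + 1 ≠ 0)] at hmul2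
      nlinarith [h3]
    have hTzero : T = 0 := by
      by_contra hTne
      have hTpos : 0 < T := lt_of_le_of_ne hT0 (Ne.symm hTne)
      have hXtop : f (yh + T • dd) ≠ ⊤ := by
        intro h
        rw [h] at hTS
        exact absurd hTS (EReal.coe_lt_top _).not_ge
      obtain ⟨ε, hε, hεT, hsum⟩ := lemEx T hTpos hXtop
      obtain ⟨V, hV⟩ := ereal_real_cases _ (hbot _) hXtop
      have hVle : V ≤ A - (α - T) * r := by
        rw [hV] at hTS; exact_mod_cast hTS
      have h4 : ((B + ε * r : ℝ) : EReal) + f (yh + (T - ε) • dd) ≤ ((B + V : ℝ) : EReal) := by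
        calc ((B + ε * r : ℝ) : EReal) + f (yh + (T - ε) • dd)
            ≤ f (y + ε • dd) + f (yh + (T - ε) • dd) := add_le_add_left (lemA r hr ε hε) _
          _ ≤ f y + f (yh + T • dd) := hsum
          _ = ((B + V : ℝ) : EReal) := by rw [hB, hV, ← EReal.coe_add]
      obtain ⟨w, hw, hwle⟩ := ereal_sum_real (hbot _) h4
      have hTεS : T - ε ∈ S := by
        refine ⟨by linarith, by linarith, ?_⟩
        rw [hw, EReal.coe_le_coe_iff]
        nlinarith
      have := csInf_le hbddS hTεS
      rw [← hT] at this
      linarith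
    rw [hTzero] at hTS
    have hT0v : yh + (0 : ℝ) • dd = yh := by simp
    rw [hT0v, hBy, EReal.coe_le_coe_iff] at hTS
    rw [hA, hBy, ← EReal.coe_sub, ← EReal.coe_mul, EReal.coe_le_coe_iff]
    rw [← div_eq_mul_inv, le_div_iff₀ hα]
    nlinarith
  have main2 : slopeR f y i j ≤ slopeR f yh i j := by
    by_contra hlt
    push_neg at hlt
    obtain ⟨r, hr1, hr2⟩ := EReal.exists_between_coe_real hlt
    exact absurd (main r hr2) (not_le.mpr hr1)
  exact ⟨main2, lt_of_lt_of_le hd main2⟩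
end
end
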